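/- arXiv:1811.06493 — 2 statements merged into one kernel-verified Lean document; each statement's English description precedes it below -/
import Mathlib

section
/- Intermediate dimensions are invariant under bi-Lipschitz maps: if f : ℝⁿ → ℝᵐ is bi-Lipschitz onto its image and F ⊆ ℝⁿ is bounded, then for every θ ∈ [0,1] the lower (resp. upper) θ-intermediate dimension of f(F) equals that of F. -/
open Set

noncomputable section

/-- There is a countable cover of `F` by sets whose diameters all lie between `lo` and `hi`,
with `s`-power diameter sum at most `ε`. -/
def ICov {X : Type} [PseudoEMetricSpace X] (F : Set X) (s lo hi ε : ℝ) : Prop :=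
  ∃ (ι : Type) (_ : Countable ι) (U : ι → Set X), F ⊆ ⋃ i, U i ∧
    (∀ i, ENNReal.ofReal lo ≤ EMetric.diam (U i) ∧ EMetric.diam (U i) ≤ ENNReal.ofReal hi) ∧
    ∑' i, EMetric.diam (U i) ^ s ≤ ENNReal.ofReal ε

/-- There is a countable cover of `F` with no diameter restrictions and
`s`-power diameter sum at most `ε`. -/
def HCov {X : Type} [PseudoEMetricSpace X] (F : Set X) (s ε : ℝ) : Prop :=
  ∃ (ι : Type) (_ : Countable ι) (U : ι → Set X), F ⊆ ⋃ i, U i ∧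
    ∑' i, EMetric.diam (U i) ^ s ≤ ENNReal.ofReal ε

/-- The lower `θ`-intermediate dimension. -/
def lowerIDim {X : Type} [PseudoEMetricSpace X] (F : Set X) (θ : ℝ) : ℝ :=
  if θ = 0 then sInf {s : ℝ | 0 ≤ s ∧ ∀ ε > 0, HCov F s ε}
  else sInf {s : ℝ | 0 ≤ s ∧ ∀ ε > 0, ∀ δ₀ > 0, ∃ δ : ℝ, 0 < δ ∧ δ ≤ δ₀ ∧
    ICov F s (δ ^ (1 / θ)) δ ε}

/-- The upper `θ`-intermediate dimension. -/
def upperIDim {X : Type} [PseudoEMetricSpace X] (F : Set X) (θ : ℝ) : ℝ :=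
  if θ = 0 then sInf {s : ℝ | 0 ≤ s ∧ ∀ ε > 0, HCov F s ε}
  else sInf {s : ℝ | 0 ≤ s ∧ ∀ ε > 0, ∃ δ₀ > (0:ℝ), ∀ δ : ℝ, 0 < δ → δ ≤ δ₀ →
    ICov F s (δ ^ (1 / θ)) δ ε}

/-- A countable cover of `F` by sets all of diameter exactly `δ`,
with `s`-power diameter sum at most `ε`. -/
def EqCov {X : Type} [PseudoEMetricSpace X] (F : Set X) (s δ ε : ℝ) : Prop :=
  ∃ (ι : Type) (_ : Countable ι) (U : ι → Set X), F ⊆ ⋃ i, U i ∧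
    (∀ i, EMetric.diam (U i) = ENNReal.ofReal δ) ∧
    ∑' i, EMetric.diam (U i) ^ s ≤ ENNReal.ofReal ε

/-- The lower box dimension. -/
def lowerBoxDim {X : Type} [PseudoEMetricSpace X] (F : Set X) : ℝ :=
  sInf {s : ℝ | 0 ≤ s ∧ ∀ ε > 0, ∀ δ₀ > 0, ∃ δ : ℝ, 0 < δ ∧ δ ≤ δ₀ ∧ EqCov F s δ ε}

/-- The upper box dimension. -/
def upperBoxDim {X : Type} [PseudoEMetricSpace X] (F : Set X) : ℝ :=
  sInf {s : ℝ | 0 ≤ s ∧ ∀ ε > 0, ∃ δ₀ > (0:ℝ), ∀ δ : ℝ, 0 < δ → δ ≤ δ₀ → EqCov F s δ ε}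

/-- The Assouad dimension. -/
def assouadDim {X : Type} [PseudoEMetricSpace X] (F : Set X) : ℝ :=
  sInf {s : ℝ | 0 ≤ s ∧ ∃ C > (0:ℝ), ∀ x ∈ F, ∀ r R : ℝ, 0 < r → r < R →
    ∃ t : Finset (Set X), (F ∩ EMetric.closedBall x (ENNReal.ofReal R) ⊆ ⋃ U ∈ t, U) ∧
      (∀ U ∈ t, EMetric.diam U ≤ ENNReal.ofReal r) ∧ (t.card : ℝ) ≤ C * (R / r) ^ s}

end

section helpers
open EMetric ENNReal

lemma sInf01 {S : Set ℝ} (h1 : S ⊆ Ici 0) (h2 : Ioi 0 ⊆ S) : sInf S = 0 := by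
  have hbdd : BddBelow S := ⟨0, fun x hx => h1 hx⟩
  have hne : S.Nonempty := ⟨1, h2 (by norm_num)⟩
  refine le_antisymm ?_ (le_csInf hne fun x hx => h1 hx)
  have := csInf_le_csInf hbdd (Set.nonempty_Ioi (a := (0:ℝ))) h2
  rwa [csInf_Ioi] at this

lemma icov_empty {X : Type} [PseudoEMetricSpace X] (s lo hi ε : ℝ) :
    ICov (∅ : Set X) s lo hi ε := by
  refine ⟨Empty, inferInstance, fun i => i.elim, by simp, fun i => i.elim, ?_⟩
  simp

lemma hcov_empty {X : Type} [PseudoEMetricSpace X] (s ε : ℝ) :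
    HCov (∅ : Set X) s ε := by
  refine ⟨Empty, inferInstance, fun i => i.elim, by simp, ?_⟩
  simp

lemma lowerIDim_empty {X : Type} [PseudoEMetricSpace X] (θ : ℝ) :
    lowerIDim (∅ : Set X) θ = 0 := by
  unfold lowerIDim
  split
  · refine sInf01 (fun s hs => hs.1) (fun s hs => ⟨le_of_lt hs, fun ε hε => hcov_empty s ε⟩)
  · refine sInf01 (fun s hs => hs.1) (fun s hs => ⟨le_of_lt hs, fun ε hε δ₀ hδ₀ => ?_⟩)
    exact ⟨δ₀, hδ₀, le_refl _, icov_empty _ _ _ _⟩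

lemma upperIDim_empty {X : Type} [PseudoEMetricSpace X] (θ : ℝ) :
    upperIDim (∅ : Set X) θ = 0 := by
  unfold upperIDim
  split
  · refine sInf01 (fun s hs => hs.1) (fun s hs => ⟨le_of_lt hs, fun ε hε => hcov_empty s ε⟩)
  · refine sInf01 (fun s hs => hs.1) (fun s hs => ⟨le_of_lt hs, fun ε hε => ?_⟩)
    exact ⟨1, one_pos, fun δ hδ hδ' => icov_empty _ _ _ _⟩

end helpers

section sub
open EMetric ENNReal

variable {X : Type} [PseudoEMetricSpace X]

lemma icov_sub_false [Subsingleton X] {F : Set X} (hne : F.Nonempty)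
    {s lo hi ε : ℝ} (hlo : 0 < lo) : ¬ ICov F s lo hi ε := by
  rintro ⟨ι, _, U, hcov, hd, -⟩
  obtain ⟨x, hx⟩ := hne
  obtain ⟨i, hi⟩ := Set.mem_iUnion.1 (hcov hx)
  have h0 : EMetric.diam (U i) = 0 :=
    EMetric.diam_subsingleton (Set.subsingleton_of_subsingleton)
  have h1 := (hd i).1
  rw [h0] at h1
  exact absurd (le_antisymm h1 (zero_le)) (by simpa using (ENNReal.ofReal_pos.2 hlo).ne')

lemma hcov_sub [Subsingleton X] (F : Set X) {s : ℝ} (hs : 0 < s) {ε : ℝ} : HCov F s ε := by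
  refine ⟨PUnit, inferInstance, fun _ => F, fun x hx => Set.mem_iUnion.2 ⟨PUnit.unit, hx⟩, ?_⟩
  have h0 : EMetric.diam F = 0 := EMetric.diam_subsingleton (Set.subsingleton_of_subsingleton)
  rw [tsum_eq_single PUnit.unit (by intro b hb; exact absurd rfl hb), h0,
    ENNReal.zero_rpow_of_pos hs]
  exact zero_le

lemma lowerIDim_sub [Subsingleton X] {F : Set X} (hne : F.Nonempty) (θ : ℝ) :
    lowerIDim F θ = 0 := by
  unfold lowerIDim
  split
  · exact sInf01 (fun s hs => hs.1) (fun s hs => ⟨le_of_lt hs, fun ε hε => hcov_sub F hs⟩)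
  · rename_i hθ0
    have : {s : ℝ | 0 ≤ s ∧ ∀ ε > 0, ∀ δ₀ > 0, ∃ δ : ℝ, 0 < δ ∧ δ ≤ δ₀ ∧
        ICov F s (δ ^ (1 / θ)) δ ε} = ∅ := by
      refine Set.eq_empty_iff_forall_notMem.2 fun s hs => ?_
      obtain ⟨δ, hδ, -, hic⟩ := hs.2 1 one_pos 1 one_pos
      exact icov_sub_false hne (Real.rpow_pos_of_pos hδ _) hic
    rw [this]; exact Real.sInf_empty

lemma upperIDim_sub [Subsingleton X] {F : Set X} (hne : F.Nonempty) (θ : ℝ) :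
    upperIDim F θ = 0 := by
  unfold upperIDim
  split
  · exact sInf01 (fun s hs => hs.1) (fun s hs => ⟨le_of_lt hs, fun ε hε => hcov_sub F hs⟩)
  · rename_i hθ0
    have : {s : ℝ | 0 ≤ s ∧ ∀ ε > 0, ∃ δ₀ > (0:ℝ), ∀ δ : ℝ, 0 < δ → δ ≤ δ₀ →
        ICov F s (δ ^ (1 / θ)) δ ε} = ∅ := by
      refine Set.eq_empty_iff_forall_notMem.2 fun s hs => ?_
      obtain ⟨δ₀, hδ₀, h⟩ := hs.2 1 one_pos
      exact icov_sub_false hne (Real.rpow_pos_of_pos hδ₀ _) (h δ₀ hδ₀ le_rfl)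
    rw [this]; exact Real.sInf_empty

end sub

section ball
open EMetric ENNReal

variable {E : Type} [NormedAddCommGroup E] [NormedSpace ℝ E] [Nontrivial E]

lemma ediam_cball (p : E) {r : ℝ} (hr : 0 ≤ r) :
    EMetric.diam (Metric.closedBall p r) = ENNReal.ofReal (2 * r) := by
  refine le_antisymm (Metric.ediam_le_of_forall_dist_le fun x hx y hy => ?_) ?_
  · calc dist x y ≤ dist x p + dist y p := dist_triangle_right _ _ _
    _ ≤ r + r := add_le_add (Metric.mem_closedBall.1 hx) (Metric.mem_closedBall.1 hy)
    _ = 2 * r := by ring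
  · obtain ⟨v, hv⟩ := exists_norm_eq E hr
    have h1 : p + v ∈ Metric.closedBall p r := by
      simp [Metric.mem_closedBall, dist_eq_norm, hv]
    have h2 : p - v ∈ Metric.closedBall p r := by
      simp [Metric.mem_closedBall, dist_eq_norm, hv, norm_sub_rev]
    have := EMetric.edist_le_diam_of_mem h1 h2
    rw [edist_dist] at this
    have hd : dist (p + v) (p - v) = 2 * r := by
      rw [dist_eq_norm]
      have : p + v - (p - v) = v + v := by abel
      rw [this]
      calc ‖v + v‖ = ‖(2:ℝ) • v‖ := by rw [two_smul]
      _ = 2 * r := by rw [norm_smul]; simp [hv]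
    rwa [hd] at this

/-- singleton covered by one ball of diameter exactly δ -/
lemma icov_singleton (y : E) {s δ ε : ℝ} (hδ : 0 < δ) (hδ1 : δ ≤ 1)
    {θ : ℝ} (hθ : 0 < θ) (hθ1 : θ ≤ 1) (hs : 0 ≤ s) (hδε : δ ^ s ≤ ε) :
    ICov ({y} : Set E) s (δ ^ (1 / θ)) δ ε := by
  refine ⟨PUnit, inferInstance, fun _ => Metric.closedBall y (δ / 2),
    fun x hx => Set.mem_iUnion.2 ⟨PUnit.unit, by
      rw [Set.mem_singleton_iff.1 hx]; exact Metric.mem_closedBall_self (by linarith)⟩, ?_, ?_⟩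
  · intro i
    rw [ediam_cball y (by linarith : (0:ℝ) ≤ δ / 2)]
    constructor
    · apply ENNReal.ofReal_le_ofReal
      calc δ ^ (1 / θ) ≤ δ ^ (1 : ℝ) :=
            Real.rpow_le_rpow_of_exponent_ge hδ hδ1 (by
              rw [le_div_iff₀ hθ, one_mul]; exact hθ1)
      _ = δ := Real.rpow_one δ
      _ = 2 * (δ / 2) := by ring
    · apply ENNReal.ofReal_le_ofReal; linarith
  · rw [tsum_eq_single PUnit.unit (by intro b hb; exact absurd rfl hb),
      ediam_cball y (by linarith : (0:ℝ) ≤ δ / 2)]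
    have : 2 * (δ / 2) = δ := by ring
    rw [this, ENNReal.ofReal_rpow_of_nonneg (le_of_lt hδ) hs]
    exact ENNReal.ofReal_le_ofReal hδε

lemma hcov_singleton (y : E) {s : ℝ} (hs : 0 < s) (ε : ℝ) : HCov ({y} : Set E) s ε := by
  refine ⟨PUnit, inferInstance, fun _ => {y}, fun x hx => Set.mem_iUnion.2 ⟨PUnit.unit, hx⟩, ?_⟩
  rw [tsum_eq_single PUnit.unit (by intro b hb; exact absurd rfl hb)]
  beta_reduce
  rw [show EMetric.diam ({y} : Set E) = 0 from EMetric.diam_singleton,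
    ENNReal.zero_rpow_of_pos hs]
  exact zero_le

lemma delta_choice {s ε δ₀ : ℝ} (hs : 0 < s) (hε : 0 < ε) (hδ₀ : 0 < δ₀) :
    ∃ δ : ℝ, 0 < δ ∧ δ ≤ δ₀ ∧ δ ≤ 1 ∧ δ ^ s ≤ ε := by
  refine ⟨min δ₀ (min 1 (ε ^ (1/s))), ?_, min_le_left _ _, le_trans (min_le_right _ _) (min_le_left _ _), ?_⟩
  · exact lt_min hδ₀ (lt_min one_pos (Real.rpow_pos_of_pos hε _))
  · have h1 : min δ₀ (min 1 (ε ^ (1/s))) ≤ ε ^ (1/s) :=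
      le_trans (min_le_right _ _) (min_le_right _ _)
    have h0 : (0:ℝ) ≤ min δ₀ (min 1 (ε ^ (1/s))) :=
      le_of_lt (lt_min hδ₀ (lt_min one_pos (Real.rpow_pos_of_pos hε _)))
    calc (min δ₀ (min 1 (ε ^ (1/s)))) ^ s ≤ (ε ^ (1/s)) ^ s :=
          Real.rpow_le_rpow h0 h1 (le_of_lt hs)
    _ = ε ^ ((1/s) * s) := (Real.rpow_mul (le_of_lt hε) _ _).symm
    _ = ε := by rw [one_div_mul_cancel hs.ne', Real.rpow_one]

lemma lowerIDim_singleton (y : E) {θ : ℝ} (hθ : θ ∈ Set.Icc (0:ℝ) 1) :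
    lowerIDim ({y} : Set E) θ = 0 := by
  unfold lowerIDim
  split
  · exact sInf01 (fun s hs => hs.1) (fun s hs => ⟨le_of_lt hs, fun ε hε => hcov_singleton y hs ε⟩)
  · rename_i hθ0
    have hθpos : 0 < θ := lt_of_le_of_ne hθ.1 (Ne.symm hθ0)
    refine sInf01 (fun s hs => hs.1) (fun s hs => ⟨le_of_lt hs, fun ε hε δ₀ hδ₀ => ?_⟩)
    obtain ⟨δ, h1, h2, h3, h4⟩ := delta_choice hs hε hδ₀
    exact ⟨δ, h1, h2, icov_singleton y h1 h3 hθpos hθ.2 (le_of_lt hs) h4⟩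

lemma upperIDim_singleton (y : E) {θ : ℝ} (hθ : θ ∈ Set.Icc (0:ℝ) 1) :
    upperIDim ({y} : Set E) θ = 0 := by
  unfold upperIDim
  split
  · exact sInf01 (fun s hs => hs.1) (fun s hs => ⟨le_of_lt hs, fun ε hε => hcov_singleton y hs ε⟩)
  · rename_i hθ0
    have hθpos : 0 < θ := lt_of_le_of_ne hθ.1 (Ne.symm hθ0)
    refine sInf01 (fun s hs => hs.1) (fun s hs => ⟨le_of_lt hs, fun ε hε => ?_⟩)
    refine ⟨min 1 (ε ^ (1/s)), lt_min one_pos (Real.rpow_pos_of_pos hε _), fun δ hδ hδ' => ?_⟩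
    refine icov_singleton y hδ (le_trans hδ' (min_le_left _ _)) hθpos hθ.2 (le_of_lt hs) ?_
    calc δ ^ s ≤ (ε ^ (1/s)) ^ s :=
          Real.rpow_le_rpow (le_of_lt hδ) (le_trans hδ' (min_le_right _ _)) (le_of_lt hs)
    _ = ε ^ ((1/s) * s) := (Real.rpow_mul (le_of_lt hε) _ _).symm
    _ = ε := by rw [one_div_mul_cancel hs.ne', Real.rpow_one]

end ball

section transfer
open EMetric ENNReal
open scoped NNReal

lemma low_ediam_image_le {X Y : Type} [PseudoEMetricSpace X] [PseudoEMetricSpace Y]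
    {φ : X → Y} {A : Set X} {L : ℝ≥0} (hφ : LipschitzOnWith L φ A) :
    EMetric.diam (φ '' A) ≤ (L : ℝ≥0∞) * EMetric.diam A := by
  apply EMetric.diam_le
  rintro _ ⟨x, hx, rfl⟩ _ ⟨y, hy, rfl⟩
  calc edist (φ x) (φ y) ≤ (L : ℝ≥0∞) * edist x y := hφ hx hy
  _ ≤ (L : ℝ≥0∞) * EMetric.diam A := mul_le_mul_right (EMetric.edist_le_diam_of_mem hx hy) _

lemma hcov_transfer {X Y : Type} [PseudoMetricSpace X] [PseudoMetricSpace Y]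
    {φ : X → Y} {A : Set X} {L : ℝ≥0} (hL : 1 ≤ (L:ℝ))
    (hφ : LipschitzOnWith L φ A) {s ε : ℝ} (hs : 0 ≤ s) (hε : 0 < ε)
    (h : HCov A s (ε / (L:ℝ) ^ s)) : HCov (φ '' A) s ε := by
  obtain ⟨ι, hι, U, hcov, hsum⟩ := h
  refine ⟨ι, hι, fun i => φ '' (U i ∩ A), ?_, ?_⟩
  · rintro y ⟨x, hx, rfl⟩
    obtain ⟨i, hi⟩ := Set.mem_iUnion.1 (hcov hx)
    exact Set.mem_iUnion.2 ⟨i, ⟨x, ⟨hi, hx⟩, rfl⟩⟩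
  · have hLs : (0:ℝ) < (L:ℝ) ^ s := Real.rpow_pos_of_pos (lt_of_lt_of_le one_pos hL) s
    calc ∑' i, EMetric.diam (φ '' (U i ∩ A)) ^ s
        ≤ ∑' i, ((L : ℝ≥0∞) ^ s * EMetric.diam (U i) ^ s) := by
          refine ENNReal.tsum_le_tsum fun i => ?_
          rw [← ENNReal.mul_rpow_of_nonneg _ _ hs]
          refine ENNReal.rpow_le_rpow ?_ hs
          exact le_trans (low_ediam_image_le (hφ.mono Set.inter_subset_right))
            (mul_le_mul_right (EMetric.diam_mono Set.inter_subset_left) _)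
    _ = (L : ℝ≥0∞) ^ s * ∑' i, EMetric.diam (U i) ^ s := ENNReal.tsum_mul_left
    _ ≤ (L : ℝ≥0∞) ^ s * ENNReal.ofReal (ε / (L:ℝ) ^ s) := mul_le_mul_right hsum _
    _ = ENNReal.ofReal ((L:ℝ) ^ s) * ENNReal.ofReal (ε / (L:ℝ) ^ s) := by
          rw [← ENNReal.ofReal_coe_nnreal, ENNReal.ofReal_rpow_of_nonneg L.coe_nonneg hs]
    _ = ENNReal.ofReal ε := by
          rw [← ENNReal.ofReal_mul (le_of_lt hLs), mul_comm, div_mul_cancel₀ _ hLs.ne']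

end transfer

section icovtransfer
open EMetric ENNReal
open scoped NNReal

lemma icov_transfer {X : Type} [PseudoMetricSpace X] {E : Type} [NormedAddCommGroup E]
    [NormedSpace ℝ E] [Nontrivial E]
    {φ : X → E} {A : Set X} {L : ℝ≥0} (hL : 1 ≤ (L:ℝ)) (hφ : LipschitzOnWith L φ A)
    {s θ : ℝ} (hs : 0 ≤ s) (hθ : 0 < θ) (hθ1 : θ ≤ 1)
    {δ₁ ε : ℝ} (hδ₁ : 0 < δ₁) (hsmall : 2 * (L:ℝ) * δ₁ ≤ 1) (hε : 0 < ε)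
    (h : ICov A s (δ₁ ^ (1/θ)) δ₁ ε) :
    ICov (φ '' A) s ((2 * (L:ℝ) * δ₁) ^ (1/θ)) (2 * (L:ℝ) * δ₁)
      ((2*(L:ℝ)) ^ (s/θ) * ε) := by
  obtain ⟨ι, hι, U, hcov, hd, hsum⟩ := h
  haveI := hι
  set lo' : ℝ := (2 * (L:ℝ) * δ₁) ^ (1/θ) with hlo'def
  have hL0 : (0:ℝ) < L := lt_of_lt_of_le one_pos hL
  have h2L : (1:ℝ) ≤ 2 * L := by linarith
  have hδnew : (0:ℝ) < 2 * L * δ₁ := by positivity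
  have hθinv : (1:ℝ) ≤ 1/θ := by rw [le_div_iff₀ hθ, one_mul]; exact hθ1
  have hlo'pos : 0 < lo' := Real.rpow_pos_of_pos hδnew _
  have hlo'le : lo' ≤ 2 * (L:ℝ) * δ₁ := by
    calc lo' ≤ (2 * (L:ℝ) * δ₁) ^ (1:ℝ) :=
          Real.rpow_le_rpow_of_exponent_ge hδnew hsmall hθinv
    _ = 2 * (L:ℝ) * δ₁ := Real.rpow_one _
  have hfin : ∀ i, EMetric.diam (U i) ≠ ⊤ :=
    fun i => ne_top_of_le_ne_top ENNReal.ofReal_ne_top (hd i).2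
  set d : ι → ℝ := fun i => (EMetric.diam (U i)).toReal with hddef
  have hofd : ∀ i, ENNReal.ofReal (d i) = EMetric.diam (U i) :=
    fun i => ENNReal.ofReal_toReal (hfin i)
  have hd_lo : ∀ i, δ₁ ^ (1/θ) ≤ d i := by
    intro i
    have h1 := (hd i).1
    rw [← hofd i] at h1
    exact (ENNReal.ofReal_le_ofReal_iff ENNReal.toReal_nonneg).1 h1
  have hd_hi : ∀ i, d i ≤ δ₁ :=
    fun i => ENNReal.toReal_le_of_le_ofReal (le_of_lt hδ₁) (hd i).2
  have hd_nonneg : ∀ i, 0 ≤ d i := fun i => ENNReal.toReal_nonneg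
  have hxc : ∀ i : {i : ι // (U i ∩ A).Nonempty}, ∃ z, z ∈ U i.1 ∩ A := fun i => i.2
  set x : {i : ι // (U i ∩ A).Nonempty} → X := fun i => (hxc i).choose with hxdef
  have hx : ∀ i, x i ∈ U i.1 ∩ A := fun i => (hxc i).choose_spec
  set r : {i : ι // (U i ∩ A).Nonempty} → ℝ := fun i => max ((L:ℝ) * d i.1) (lo' / 2)
    with hrdef
  have hr_nonneg : ∀ i, 0 ≤ r i := fun i => le_trans (by linarith) (le_max_right _ _)
  set B : {i : ι // (U i ∩ A).Nonempty} → Set E := fun i => Metric.closedBall (φ (x i)) (r i)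
    with hBdef
  have hdiamB : ∀ i, EMetric.diam (B i) = ENNReal.ofReal (2 * r i) :=
    fun i => ediam_cball _ (hr_nonneg i)
  have key : ∀ i, (2 * r i) ^ s ≤ (2*(L:ℝ)) ^ (s/θ) * d i.1 ^ s := by
    intro i
    have hds : (0:ℝ) ≤ d i.1 ^ s := Real.rpow_nonneg (hd_nonneg _) _
    have hsθ : s ≤ s / θ := by rw [le_div_iff₀ hθ]; nlinarith
    rcases le_total ((L:ℝ) * d i.1) (lo' / 2) with hcase | hcase
    · have hri : r i = lo' / 2 := max_eq_right hcase
      have h2 : 2 * r i = lo' := by rw [hri]; ring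
      rw [h2, hlo'def]
      have e1 : (2 * (L:ℝ) * δ₁) ^ (1/θ) = (2*(L:ℝ)) ^ (1/θ) * δ₁ ^ (1/θ) :=
        Real.mul_rpow (by positivity) (le_of_lt hδ₁)
      rw [e1, Real.mul_rpow (by positivity) (by positivity)]
      have e2 : ((2*(L:ℝ)) ^ (1/θ)) ^ s = (2*(L:ℝ)) ^ (s/θ) := by
        rw [← Real.rpow_mul (by positivity : (0:ℝ) ≤ 2*(L:ℝ))]
        congr 1
        ring
      rw [e2]
      refine mul_le_mul_of_nonneg_left ?_ (Real.rpow_nonneg (by positivity) _)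
      exact Real.rpow_le_rpow (by positivity) (hd_lo i.1) hs
    · have hri : r i = (L:ℝ) * d i.1 := max_eq_left hcase
      rw [hri, ← mul_assoc, Real.mul_rpow (by positivity) (hd_nonneg _)]
      exact mul_le_mul_of_nonneg_right (Real.rpow_le_rpow_of_exponent_le h2L hsθ) hds
  refine ⟨{i : ι // (U i ∩ A).Nonempty}, inferInstance, B, ?_, ?_, ?_⟩
  · rintro y ⟨z, hz, rfl⟩
    obtain ⟨i, hi⟩ := Set.mem_iUnion.1 (hcov hz)
    have hne : (U i ∩ A).Nonempty := ⟨z, hi, hz⟩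
    refine Set.mem_iUnion.2 ⟨⟨i, hne⟩, ?_⟩
    have h1 : dist z (x ⟨i, hne⟩) ≤ d i := by
      have h2 := EMetric.edist_le_diam_of_mem hi (hx ⟨i, hne⟩).1
      rw [dist_edist]
      exact ENNReal.toReal_mono (hfin i) h2
    have hdz : dist (φ z) (φ (x ⟨i, hne⟩)) ≤ (L:ℝ) * d i := by
      calc dist (φ z) (φ (x ⟨i, hne⟩)) ≤ (L:ℝ) * dist z (x ⟨i, hne⟩) :=
            hφ.dist_le_mul z hz (x ⟨i, hne⟩) (hx ⟨i, hne⟩).2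
      _ ≤ (L:ℝ) * d i := mul_le_mul_of_nonneg_left h1 (le_of_lt hL0)
    exact Metric.mem_closedBall.2 (le_trans hdz (le_max_left _ _))
  · intro i
    rw [hdiamB i]
    constructor
    · refine ENNReal.ofReal_le_ofReal ?_
      have := le_max_right ((L:ℝ) * d i.1) (lo' / 2)
      have hri : lo' / 2 ≤ r i := this
      linarith
    · refine ENNReal.ofReal_le_ofReal ?_
      rcases le_total ((L:ℝ) * d i.1) (lo' / 2) with hcase | hcase
      · have hri : r i = lo' / 2 := max_eq_right hcase
        rw [hri]; linarith
      · have hri : r i = (L:ℝ) * d i.1 := max_eq_left hcase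
        rw [hri]
        have := hd_hi i.1
        nlinarith
  · calc ∑' i : {i : ι // (U i ∩ A).Nonempty}, EMetric.diam (B i) ^ s
        ≤ ∑' i : {i : ι // (U i ∩ A).Nonempty},
            ENNReal.ofReal ((2*(L:ℝ)) ^ (s/θ)) * EMetric.diam (U i.1) ^ s := by
          refine ENNReal.tsum_le_tsum fun i => ?_
          rw [hdiamB i, ENNReal.ofReal_rpow_of_nonneg (by positivity) hs]
          calc ENNReal.ofReal ((2 * r i) ^ s)
              ≤ ENNReal.ofReal ((2*(L:ℝ)) ^ (s/θ) * d i.1 ^ s) :=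
                ENNReal.ofReal_le_ofReal (key i)
          _ = ENNReal.ofReal ((2*(L:ℝ)) ^ (s/θ)) * ENNReal.ofReal (d i.1 ^ s) :=
                ENNReal.ofReal_mul (by positivity)
          _ = ENNReal.ofReal ((2*(L:ℝ)) ^ (s/θ)) * EMetric.diam (U i.1) ^ s := by
                rw [← ENNReal.ofReal_rpow_of_nonneg (hd_nonneg i.1) hs, hofd]
    _ = ENNReal.ofReal ((2*(L:ℝ)) ^ (s/θ)) *
          ∑' i : {i : ι // (U i ∩ A).Nonempty}, EMetric.diam (U i.1) ^ s :=
        ENNReal.tsum_mul_left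
    _ ≤ ENNReal.ofReal ((2*(L:ℝ)) ^ (s/θ)) * ∑' i : ι, EMetric.diam (U i) ^ s :=
        mul_le_mul_right
          (ENNReal.tsum_comp_le_tsum_of_injective Subtype.val_injective
            (fun i => EMetric.diam (U i) ^ s)) _
    _ ≤ ENNReal.ofReal ((2*(L:ℝ)) ^ (s/θ)) * ENNReal.ofReal ε := mul_le_mul_right hsum _
    _ = ENNReal.ofReal ((2*(L:ℝ)) ^ (s/θ) * ε) := (ENNReal.ofReal_mul (by positivity)).symm

end icovtransfer

section subsets
open EMetric ENNReal
open scoped NNReal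

lemma hset_subset {X Y : Type} [PseudoMetricSpace X] [PseudoMetricSpace Y]
    {φ : X → Y} {A : Set X} {L : ℝ≥0} (hL : 1 ≤ (L:ℝ)) (hφ : LipschitzOnWith L φ A) :
    {s : ℝ | 0 ≤ s ∧ ∀ ε > 0, HCov A s ε} ⊆
      {s : ℝ | 0 ≤ s ∧ ∀ ε > 0, HCov (φ '' A) s ε} := by
  rintro s ⟨hs, h⟩
  refine ⟨hs, fun ε hε => ?_⟩
  have hLs : (0:ℝ) < (L:ℝ) ^ s := Real.rpow_pos_of_pos (lt_of_lt_of_le one_pos hL) s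
  exact hcov_transfer hL hφ hs hε (h (ε / (L:ℝ) ^ s) (by positivity))

lemma lset_subset {X : Type} [PseudoMetricSpace X] {E : Type} [NormedAddCommGroup E]
    [NormedSpace ℝ E] [Nontrivial E]
    {φ : X → E} {A : Set X} {L : ℝ≥0} (hL : 1 ≤ (L:ℝ)) (hφ : LipschitzOnWith L φ A)
    {θ : ℝ} (hθ : 0 < θ) (hθ1 : θ ≤ 1) :
    {s : ℝ | 0 ≤ s ∧ ∀ ε > 0, ∀ δ₀ > 0, ∃ δ : ℝ, 0 < δ ∧ δ ≤ δ₀ ∧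
        ICov A s (δ ^ (1 / θ)) δ ε} ⊆
      {s : ℝ | 0 ≤ s ∧ ∀ ε > 0, ∀ δ₀ > 0, ∃ δ : ℝ, 0 < δ ∧ δ ≤ δ₀ ∧
        ICov (φ '' A) s (δ ^ (1 / θ)) δ ε} := by
  rintro s ⟨hs, h⟩
  have hL0 : (0:ℝ) < L := lt_of_lt_of_le one_pos hL
  have hK : (0:ℝ) < (2*(L:ℝ)) ^ (s/θ) := Real.rpow_pos_of_pos (by linarith) _
  refine ⟨hs, fun ε hε δ₀ hδ₀ => ?_⟩
  obtain ⟨δ₁, h1, h2, h3⟩ := h (ε / (2*(L:ℝ)) ^ (s/θ)) (by positivity)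
    (min δ₀ 1 / (2*(L:ℝ))) (by positivity)
  have hm : 2*(L:ℝ)*δ₁ ≤ min δ₀ 1 := by
    rw [div_eq_mul_inv] at h2
    calc 2*(L:ℝ)*δ₁ ≤ 2*(L:ℝ)*(min δ₀ 1 * (2*(L:ℝ))⁻¹) := by nlinarith
    _ = min δ₀ 1 := by field_simp
  refine ⟨2*(L:ℝ)*δ₁, by positivity, le_trans hm (min_le_left _ _), ?_⟩
  have hsmall : 2*(L:ℝ)*δ₁ ≤ 1 := le_trans hm (min_le_right _ _)
  have hres := icov_transfer hL hφ hs hθ hθ1 h1 hsmall (by positivity) h3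
  rwa [show (2*(L:ℝ))^(s/θ) * (ε / (2*(L:ℝ))^(s/θ)) = ε from by field_simp] at hres

lemma uset_subset {X : Type} [PseudoMetricSpace X] {E : Type} [NormedAddCommGroup E]
    [NormedSpace ℝ E] [Nontrivial E]
    {φ : X → E} {A : Set X} {L : ℝ≥0} (hL : 1 ≤ (L:ℝ)) (hφ : LipschitzOnWith L φ A)
    {θ : ℝ} (hθ : 0 < θ) (hθ1 : θ ≤ 1) :
    {s : ℝ | 0 ≤ s ∧ ∀ ε > 0, ∃ δ₀ > (0:ℝ), ∀ δ : ℝ, 0 < δ → δ ≤ δ₀ →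
        ICov A s (δ ^ (1 / θ)) δ ε} ⊆
      {s : ℝ | 0 ≤ s ∧ ∀ ε > 0, ∃ δ₀ > (0:ℝ), ∀ δ : ℝ, 0 < δ → δ ≤ δ₀ →
        ICov (φ '' A) s (δ ^ (1 / θ)) δ ε} := by
  rintro s ⟨hs, h⟩
  have hL0 : (0:ℝ) < L := lt_of_lt_of_le one_pos hL
  have hK : (0:ℝ) < (2*(L:ℝ)) ^ (s/θ) := Real.rpow_pos_of_pos (by linarith) _
  refine ⟨hs, fun ε hε => ?_⟩
  obtain ⟨δ₀', hδ₀', h'⟩ := h (ε / (2*(L:ℝ)) ^ (s/θ)) (by positivity)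
  refine ⟨min (2*(L:ℝ)*δ₀') 1, by positivity, fun δ hδ hδle => ?_⟩
  have h1 : 0 < δ / (2*(L:ℝ)) := by positivity
  have h2 : δ / (2*(L:ℝ)) ≤ δ₀' := by
    rw [div_le_iff₀ (by linarith : (0:ℝ) < 2*(L:ℝ))]
    calc δ ≤ min (2*(L:ℝ)*δ₀') 1 := hδle
    _ ≤ 2*(L:ℝ)*δ₀' := min_le_left _ _
    _ = δ₀' * (2*(L:ℝ)) := by ring
  have heq : 2*(L:ℝ)*(δ / (2*(L:ℝ))) = δ := by field_simp
  have hsmall : 2*(L:ℝ)*(δ / (2*(L:ℝ))) ≤ 1 := by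
    rw [heq]; exact le_trans hδle (min_le_right _ _)
  have hres := icov_transfer hL hφ hs hθ hθ1 h1 hsmall (by positivity) (h' _ h1 h2)
  rw [heq] at hres
  rwa [show (2*(L:ℝ))^(s/θ) * (ε / (2*(L:ℝ))^(s/θ)) = ε from by field_simp] at hres

end subsets

open scoped NNReal in
theorem stmt18 (n m : ℕ) (f : EuclideanSpace ℝ (Fin n) → EuclideanSpace ℝ (Fin m))
    (c C : ℝ) (hc : 0 < c)
    (hbi : ∀ x y : EuclideanSpace ℝ (Fin n),
      c * dist x y ≤ dist (f x) (f y) ∧ dist (f x) (f y) ≤ C * dist x y)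
    (F : Set (EuclideanSpace ℝ (Fin n))) (hF : Bornology.IsBounded F)
    (θ : ℝ) (hθ : θ ∈ Set.Icc (0:ℝ) 1) :
    lowerIDim (f '' F) θ = lowerIDim F θ ∧ upperIDim (f '' F) θ = upperIDim F θ := by
  rcases F.eq_empty_or_nonempty with hFe | hFne
  · rw [hFe, Set.image_empty]
    exact ⟨by rw [lowerIDim_empty, lowerIDim_empty], by rw [upperIDim_empty, upperIDim_empty]⟩
  obtain ⟨x₀, hx₀⟩ := hFne
  have hFne : F.Nonempty := ⟨x₀, hx₀⟩
  -- forward Lipschitz data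
  set Lf : ℝ≥0 := Real.toNNReal (max C 1) with hLfdef
  have hLfc : (Lf : ℝ) = max C 1 :=
    Real.coe_toNNReal _ (le_trans zero_le_one (le_max_right _ _))
  have hLf1 : 1 ≤ (Lf : ℝ) := by rw [hLfc]; exact le_max_right _ _
  have hφf : LipschitzOnWith Lf f F := by
    apply LipschitzOnWith.of_dist_le_mul
    intro x _ y _
    rw [hLfc]
    exact le_trans (hbi x y).2 (mul_le_mul_of_nonneg_right (le_max_left _ _) dist_nonneg)
  -- inverse map
  set g := Function.invFunOn f F with hgdef
  have hgf : ∀ x ∈ F, g (f x) = x := by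
    intro x hx
    have h1 : f (g (f x)) = f x := Function.invFunOn_eq ⟨x, hx, rfl⟩
    have h2 := (hbi (g (f x)) x).1
    rw [h1, dist_self] at h2
    have h3 : dist (g (f x)) x = 0 := le_antisymm (by nlinarith) dist_nonneg
    exact dist_eq_zero.1 h3
  have hgmem : ∀ y ∈ f '' F, g y ∈ F := by
    rintro y ⟨x, hx, rfl⟩; rw [hgf x hx]; exact hx
  have himg : g '' (f '' F) = F := by
    apply Set.Subset.antisymm
    · rintro z ⟨y, hy, rfl⟩; exact hgmem y hy
    · intro x hx; exact ⟨f x, Set.mem_image_of_mem f hx, hgf x hx⟩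
  set Lg : ℝ≥0 := Real.toNNReal (max (1/c) 1) with hLgdef
  have hLgc : (Lg : ℝ) = max (1/c) 1 :=
    Real.coe_toNNReal _ (le_trans zero_le_one (le_max_right _ _))
  have hLg1 : 1 ≤ (Lg : ℝ) := by rw [hLgc]; exact le_max_right _ _
  have hφg : LipschitzOnWith Lg g (f '' F) := by
    apply LipschitzOnWith.of_dist_le_mul
    rintro y ⟨x, hx, rfl⟩ y' ⟨x', hx', rfl⟩
    rw [hgf x hx, hgf x' hx', hLgc]
    have h2 := (hbi x x').1
    have hd : dist x x' ≤ (1/c) * dist (f x) (f x') := by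
      rw [div_mul_eq_mul_div, le_div_iff₀ hc, mul_comm]
      linarith
    calc dist x x' ≤ (1/c) * dist (f x) (f x') := hd
    _ ≤ max (1/c) 1 * dist (f x) (f x') :=
        mul_le_mul_of_nonneg_right (le_max_left _ _) dist_nonneg
  by_cases hm : m = 0
  · -- codomain trivial
    subst hm
    haveI : Subsingleton (EuclideanSpace ℝ (Fin 0)) := inferInstance
    have hFsingle : F = {x₀} := by
      apply Set.eq_singleton_iff_unique_mem.2 ⟨hx₀, fun y hy => ?_⟩
      have h2 := (hbi y x₀).1
      have : f y = f x₀ := Subsingleton.elim _ _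
      rw [this, dist_self] at h2
      exact dist_eq_zero.1 (le_antisymm (by nlinarith) dist_nonneg)
    have himgne : (f '' F).Nonempty := hFne.image f
    by_cases hn : n = 0
    · subst hn
      haveI : Subsingleton (EuclideanSpace ℝ (Fin 0)) := inferInstance
      exact ⟨by rw [lowerIDim_sub himgne θ, lowerIDim_sub hFne θ],
        by rw [upperIDim_sub himgne θ, upperIDim_sub hFne θ]⟩
    · haveI : Nonempty (Fin n) := ⟨⟨0, Nat.pos_of_ne_zero hn⟩⟩
      haveI : Nontrivial (EuclideanSpace ℝ (Fin n)) := inferInstance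
      constructor
      · rw [lowerIDim_sub himgne θ, hFsingle, lowerIDim_singleton x₀ hθ]
      · rw [upperIDim_sub himgne θ, hFsingle, upperIDim_singleton x₀ hθ]
  · haveI : Nonempty (Fin m) := ⟨⟨0, Nat.pos_of_ne_zero hm⟩⟩
    haveI : Nontrivial (EuclideanSpace ℝ (Fin m)) := inferInstance
    by_cases hn : n = 0
    · subst hn
      haveI : Subsingleton (EuclideanSpace ℝ (Fin 0)) := inferInstance
      have hFsingle : F = {x₀} :=
        Set.eq_singleton_iff_unique_mem.2 ⟨hx₀, fun y _ => Subsingleton.elim y x₀⟩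
      have himgs : f '' F = {f x₀} := by rw [hFsingle, Set.image_singleton]
      constructor
      · rw [himgs, lowerIDim_singleton (f x₀) hθ, lowerIDim_sub hFne θ]
      · rw [himgs, upperIDim_singleton (f x₀) hθ, upperIDim_sub hFne θ]
    · haveI : Nonempty (Fin n) := ⟨⟨0, Nat.pos_of_ne_zero hn⟩⟩
      haveI : Nontrivial (EuclideanSpace ℝ (Fin n)) := inferInstance
      -- main case
      have e2h := hset_subset hLg1 hφg
      rw [himg] at e2h
      constructor
      · unfold lowerIDim
        split
        · rw [Set.Subset.antisymm e2h (hset_subset hLf1 hφf)]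
        · rename_i hθ0
          have hθpos : 0 < θ := lt_of_le_of_ne hθ.1 (Ne.symm hθ0)
          have e1 := lset_subset hLf1 hφf hθpos hθ.2
          have e2 := lset_subset hLg1 hφg hθpos hθ.2
          rw [himg] at e2
          rw [Set.Subset.antisymm e2 e1]
      · unfold upperIDim
        split
        · rw [Set.Subset.antisymm e2h (hset_subset hLf1 hφf)]
        · rename_i hθ0
          have hθpos : 0 < θ := lt_of_le_of_ne hθ.1 (Ne.symm hθ0)
          have e1 := uset_subset hLf1 hφf hθpos hθ.2
          have e2 := uset_subset hLg1 hφg hθpos hθ.2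
          rw [himg] at e2
          rw [Set.Subset.antisymm e2 e1]
end

section
/- Let F = F₁ × F_{log} ⊆ ℝ², where F₁ = {0} ∪ {1/k : k ≥ 1} and F_{log} = {0} ∪ {1/log k : k ≥ 2}. Then for θ ∈ (0,1], the lower and upper θ-intermediate dimensions of F equal θ/(1+θ) + 1, the Hausdorff dimension of F is 0, and the box dimension of F is 3/2. -/
open Set

/-- The set `{0} ∪ {1 / log k : k ∈ ℕ, k ≥ 2}`. -/
noncomputable def Flog : Set ℝ :=
  insert 0 {x : ℝ | ∃ k : ℕ, 2 ≤ k ∧ x = 1 / Real.log k}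

/-- The set `{0} ∪ {1/k : k ∈ ℕ, k ≥ 1}`. -/
noncomputable def F1 : Set ℝ :=
  insert 0 {x : ℝ | ∃ k : ℕ, 1 ≤ k ∧ x = 1 / (k : ℝ)}

/-- The product set `F1 × Flog` as a subset of the Euclidean plane. -/
noncomputable def Fprod : Set (EuclideanSpace ℝ (Fin 2)) :=
  {z : EuclideanSpace ℝ (Fin 2) | z 0 ∈ F1 ∧ z 1 ∈ Flog}


noncomputable def pt (a b : ℝ) : EuclideanSpace ℝ (Fin 2) := WithLp.toLp 2 ![a, b]

lemma dist_eq2 (x y : EuclideanSpace ℝ (Fin 2)) :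
    dist x y = Real.sqrt ((x 0 - y 0)^2 + (x 1 - y 1)^2) := by
  rw [EuclideanSpace.dist_eq, Fin.sum_univ_two]
  simp [Real.dist_eq, sq_abs]

lemma coord0_le_dist (x y : EuclideanSpace ℝ (Fin 2)) : |x 0 - y 0| ≤ dist x y := by
  rw [dist_eq2, ← Real.sqrt_sq_eq_abs]
  exact Real.sqrt_le_sqrt (by nlinarith [sq_nonneg (x 1 - y 1)])

lemma coord1_le_dist (x y : EuclideanSpace ℝ (Fin 2)) : |x 1 - y 1| ≤ dist x y := by
  rw [dist_eq2, ← Real.sqrt_sq_eq_abs]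
  exact Real.sqrt_le_sqrt (by nlinarith [sq_nonneg (x 0 - y 0)])

/-- the closed square with corner (a,b) and side l -/
def Sq (a b l : ℝ) : Set (EuclideanSpace ℝ (Fin 2)) :=
  {z | z 0 ∈ Icc a (a + l) ∧ z 1 ∈ Icc b (b + l)}

lemma sqrt2_pos : (0:ℝ) < Real.sqrt 2 := by positivity

lemma sqrt_two_sq' : Real.sqrt 2 * Real.sqrt 2 = 2 := by
  exact Real.mul_self_sqrt (by norm_num)

lemma mem_Sq {a b l : ℝ} {z : EuclideanSpace ℝ (Fin 2)} :
    z ∈ Sq a b l ↔ (a ≤ z 0 ∧ z 0 ≤ a + l) ∧ (b ≤ z 1 ∧ z 1 ≤ b + l) := by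
  simp [Sq, mem_Icc]

lemma diam_Sq {l : ℝ} (hl : 0 ≤ l) (a b : ℝ) :
    EMetric.diam (Sq a b l) = ENNReal.ofReal (l * Real.sqrt 2) := by
  have hsq : Real.sqrt (l ^ 2 + l ^ 2) = l * Real.sqrt 2 := by
    rw [show l ^ 2 + l ^ 2 = l ^ 2 * 2 by ring, Real.sqrt_mul (sq_nonneg l),
      Real.sqrt_sq hl]
  apply le_antisymm
  · apply EMetric.diam_le
    intro x hx y hy
    rw [mem_Sq] at hx hy
    rw [edist_dist]
    apply ENNReal.ofReal_le_ofReal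
    rw [dist_eq2, ← hsq]
    apply Real.sqrt_le_sqrt
    have h0 : (x 0 - y 0) ^ 2 ≤ l ^ 2 := by nlinarith [hx.1.1, hx.1.2, hy.1.1, hy.1.2]
    have h1 : (x 1 - y 1) ^ 2 ≤ l ^ 2 := by nlinarith [hx.2.1, hx.2.2, hy.2.1, hy.2.2]
    linarith
  · have h1 : pt a b ∈ Sq a b l := by
      rw [mem_Sq]; constructor <;> constructor <;> simp [pt] <;> linarith
    have h2 : pt (a + l) (b + l) ∈ Sq a b l := by
      rw [mem_Sq]; constructor <;> constructor <;> simp [pt] <;> linarith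
    calc ENNReal.ofReal (l * Real.sqrt 2) = edist (pt a b) (pt (a+l) (b+l)) := by
          rw [edist_dist, dist_eq2]
          congr 1
          rw [← hsq]
          congr 1 <;> simp [pt] <;> ring
      _ ≤ EMetric.diam (Sq a b l) := EMetric.edist_le_diam_of_mem h1 h2


lemma F1_sub : F1 ⊆ Icc 0 1 := by
  rintro x (rfl | ⟨k, hk, rfl⟩)
  · exact ⟨le_refl 0, by norm_num⟩
  · have hk' : (1:ℝ) ≤ (k:ℝ) := by exact_mod_cast hk
    constructor
    · positivity
    · rw [div_le_one (by linarith)]; linarith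

lemma log2_ge : Real.log 2 ≥ 1/2 := by
  have := Real.log_two_gt_d9
  linarith

lemma Flog_sub : Flog ⊆ Icc 0 2 := by
  rintro x (rfl | ⟨k, hk, rfl⟩)
  · exact ⟨le_refl 0, by norm_num⟩
  · have h2 : Real.log 2 ≤ Real.log k := by
      apply Real.log_le_log (by norm_num)
      exact_mod_cast hk
    have hl2 : Real.log 2 ≥ 1/2 := log2_ge
    have hpos : 0 < Real.log k := by linarith
    constructor
    · positivity
    · rw [div_le_iff₀ hpos]; linarith
section P3
open Finset in
/-- grid covering lemma -/
lemma exists_grid {y A l : ℝ} {n : ℕ} (hl : 0 < l) (hn : 0 < n) (hy : y ∈ Set.Icc 0 A)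
    (hA : A ≤ n * l) : ∃ j : ℕ, j < n ∧ y ∈ Set.Icc (j * l) (j * l + l) := by
  obtain ⟨hy0, hyA⟩ := hy
  by_cases h : ⌊y / l⌋₊ < n
  · refine ⟨⌊y / l⌋₊, h, ?_, ?_⟩
    · calc (⌊y / l⌋₊ : ℝ) * l ≤ (y / l) * l := by
            apply mul_le_mul_of_nonneg_right (Nat.floor_le (by positivity)) hl.le
      _ = y := by field_simp
    · have := Nat.lt_floor_add_one (y / l)
      calc y = (y / l) * l := by field_simp
        _ ≤ (⌊y / l⌋₊ + 1) * l := by nlinarith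
        _ = ⌊y / l⌋₊ * l + l := by ring
  · push_neg at h
    have hy' : (n : ℝ) * l ≤ y := by
      calc (n:ℝ) * l ≤ (⌊y / l⌋₊ : ℝ) * l := by
            apply mul_le_mul_of_nonneg_right (by exact_mod_cast h) hl.le
        _ ≤ (y / l) * l := mul_le_mul_of_nonneg_right (Nat.floor_le (by positivity)) hl.le
        _ = y := by field_simp
    have hyeq : y = n * l := le_antisymm (le_trans hyA hA) hy'
    refine ⟨n - 1, Nat.sub_lt hn one_pos, ?_, ?_⟩
    · rw [hyeq]
      have : ((n-1:ℕ):ℝ) = (n:ℝ) - 1 := by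
        have : (1:ℕ) ≤ n := hn
        push_cast [Nat.cast_sub this]; ring
      rw [this]; nlinarith
    · rw [hyeq]
      have : ((n-1:ℕ):ℝ) = (n:ℝ) - 1 := by
        have : (1:ℕ) ≤ n := hn
        push_cast [Nat.cast_sub this]; ring
      rw [this]; nlinarith

/-- provider: ICov from a finite set of squares -/
lemma ICov_of_sq {F : Set (EuclideanSpace ℝ (Fin 2))} {s lo hi ε : ℝ}
    (C : Finset (ℝ × ℝ × ℝ))
    (hcov : F ⊆ ⋃ c ∈ C, Sq c.1 c.2.1 c.2.2)
    (hd : ∀ c ∈ C, 0 < c.2.2 ∧ lo ≤ c.2.2 * Real.sqrt 2 ∧ c.2.2 * Real.sqrt 2 ≤ hi)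
    (hs : ∑ c ∈ C, (c.2.2 * Real.sqrt 2) ^ s ≤ ε) :
    ICov F s lo hi ε := by
  classical
  refine ⟨{x // x ∈ C}, inferInstance, fun c => Sq c.1.1 c.1.2.1 c.1.2.2, ?_, ?_, ?_⟩
  · intro z hz
    obtain ⟨c, hcC, hc⟩ := Set.mem_iUnion₂.mp (hcov hz)
    exact Set.mem_iUnion.mpr ⟨⟨c, hcC⟩, hc⟩
  · rintro ⟨c, hc⟩
    obtain ⟨h0, h1, h2⟩ := hd c hc
    rw [diam_Sq h0.le]
    exact ⟨ENNReal.ofReal_le_ofReal h1, ENNReal.ofReal_le_ofReal h2⟩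
  · have heq : ∀ c ∈ C, EMetric.diam (Sq c.1 c.2.1 c.2.2) ^ s
        = ENNReal.ofReal ((c.2.2 * Real.sqrt 2) ^ s) := by
      intro c hc
      rw [diam_Sq (hd c hc).1.le, ENNReal.ofReal_rpow_of_pos
        (by have := (hd c hc).1; positivity)]
    calc ∑' (c : {x // x ∈ C}), EMetric.diam (Sq c.1.1 c.1.2.1 c.1.2.2) ^ s
        = ∑ c ∈ C, EMetric.diam (Sq c.1 c.2.1 c.2.2) ^ s := Finset.tsum_subtype C (fun c => EMetric.diam (Sq c.1 c.2.1 c.2.2) ^ s)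
      _ = ∑ c ∈ C, ENNReal.ofReal ((c.2.2 * Real.sqrt 2) ^ s) := Finset.sum_congr rfl heq
      _ = ENNReal.ofReal (∑ c ∈ C, (c.2.2 * Real.sqrt 2) ^ s) := by
          rw [← ENNReal.ofReal_sum_of_nonneg]
          intro c hc
          have h0 := (hd c hc).1
          positivity
      _ ≤ ENNReal.ofReal ε := ENNReal.ofReal_le_ofReal hs

/-- provider: EqCov from a finite set of squares of equal side -/
lemma EqCov_of_sq {F : Set (EuclideanSpace ℝ (Fin 2))} {s δ ε : ℝ} (hδ : 0 < δ)
    (C : Finset (ℝ × ℝ))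
    (hcov : F ⊆ ⋃ c ∈ C, Sq c.1 c.2 (δ / Real.sqrt 2))
    (hs : (C.card : ℝ) * δ ^ s ≤ ε) :
    EqCov F s δ ε := by
  classical
  have hl : 0 < δ / Real.sqrt 2 := by positivity
  have hld : δ / Real.sqrt 2 * Real.sqrt 2 = δ := by
    field_simp
  refine ⟨{x // x ∈ C}, inferInstance, fun c => Sq c.1.1 c.1.2 (δ / Real.sqrt 2), ?_, ?_, ?_⟩
  · intro z hz
    obtain ⟨c, hcC, hc⟩ := Set.mem_iUnion₂.mp (hcov hz)
    exact Set.mem_iUnion.mpr ⟨⟨c, hcC⟩, hc⟩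
  · rintro ⟨c, hc⟩
    rw [diam_Sq hl.le, hld]
  · calc ∑' (c : {x // x ∈ C}), EMetric.diam (Sq c.1.1 c.1.2 (δ / Real.sqrt 2)) ^ s
        = ∑ c ∈ C, EMetric.diam (Sq c.1 c.2 (δ / Real.sqrt 2)) ^ s := Finset.tsum_subtype C (fun c => EMetric.diam (Sq c.1 c.2 (δ / Real.sqrt 2)) ^ s)
      _ = ∑ c ∈ C, ENNReal.ofReal (δ ^ s) := by
          apply Finset.sum_congr rfl
          intro c hc
          rw [diam_Sq hl.le, hld, ENNReal.ofReal_rpow_of_pos hδ]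
      _ = C.card • ENNReal.ofReal (δ ^ s) := Finset.sum_const _
      _ = ENNReal.ofReal (C.card * δ ^ s) := by
          rw [nsmul_eq_mul, ENNReal.ofReal_mul (by positivity)]
          simp
      _ ≤ ENNReal.ofReal ε := ENNReal.ofReal_le_ofReal hs
end P3
section P4

lemma ceil_le_add_one {x : ℝ} (hx : 0 ≤ x) : (⌈x⌉₊ : ℝ) ≤ x + 1 := (Nat.ceil_lt_add_one hx).le

lemma one_le_rpow_neg {δ e : ℝ} (h0 : 0 < δ) (h1 : δ ≤ 1) (he : 0 ≤ e) : 1 ≤ δ ^ (-e) :=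
  Real.one_le_rpow_of_pos_of_le_one_of_nonpos h0 h1 (by linarith)

lemma rpow_le_of_base_le {δ δ₀ e : ℝ} (h0 : 0 ≤ δ) (h : δ ≤ δ₀) (he : 0 ≤ e) :
    δ ^ e ≤ δ₀ ^ e := Real.rpow_le_rpow h0 h he

lemma eqcov_upper {s : ℝ} (hs : 3/2 < s) :
    ∀ ε > 0, ∃ δ₀ > (0:ℝ), ∀ δ : ℝ, 0 < δ → δ ≤ δ₀ → EqCov Fprod s δ ε := by
  intro ε hε
  set η := s - 3/2 with hη
  have hη0 : 0 < η := by simp [hη]; linarith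
  refine ⟨min 1 ((ε/20) ^ η⁻¹), by positivity, ?_⟩
  intro δ hδ hδ₀
  have hδ1 : δ ≤ 1 := le_trans hδ₀ (min_le_left _ _)
  have hδε : δ ≤ (ε/20) ^ η⁻¹ := le_trans hδ₀ (min_le_right _ _)
  classical
  set l := δ / Real.sqrt 2 with hl
  have hlpos : 0 < l := by positivity
  set K := ⌈δ ^ (-(1/2:ℝ))⌉₊ with hK
  set m := ⌈δ ^ ((1/2:ℝ)) / l⌉₊ with hm
  set ny := ⌈2 / l⌉₊ with hny
  have hKpos : 0 < K := Nat.ceil_pos.mpr (by positivity)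
  have hmpos : 0 < m := Nat.ceil_pos.mpr (by positivity)
  have hnypos : 0 < ny := Nat.ceil_pos.mpr (by positivity)
  set C : Finset (ℝ × ℝ) :=
    ((Finset.Icc 1 K) ×ˢ (Finset.range ny)).image
      (fun p => ((1:ℝ)/(p.1:ℝ), (p.2:ℝ) * l)) ∪
    ((Finset.range m) ×ˢ (Finset.range ny)).image
      (fun p => ((p.1:ℝ) * l, (p.2:ℝ) * l)) with hC
  apply EqCov_of_sq hδ C
  · -- cover
    intro z hz
    obtain ⟨hz0, hz1⟩ := hz
    have hz1' : z 1 ∈ Set.Icc (0:ℝ) 2 := Flog_sub hz1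
    obtain ⟨j, hj, hjmem⟩ := exists_grid hlpos hnypos hz1'
      (by calc (2:ℝ) ≤ (2/l) * l := by field_simp; norm_num
            _ ≤ ny * l := by
                apply mul_le_mul_of_nonneg_right (Nat.le_ceil _) hlpos.le)
    have hcase : (∃ k : ℕ, 1 ≤ k ∧ k ≤ K ∧ z 0 = 1/(k:ℝ)) ∨ z 0 ∈ Set.Icc 0 (δ ^ ((1/2:ℝ))) := by
      rcases hz0 with h | ⟨k, hk, hkeq⟩
      · right; rw [h]; exact ⟨le_refl 0, by positivity⟩
      · by_cases hkK : k ≤ K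
        · exact Or.inl ⟨k, hk, hkK, hkeq⟩
        · right
          push_neg at hkK
          have hkR : (K:ℝ) + 1 ≤ (k:ℝ) := by exact_mod_cast hkK
          have hKR : δ ^ (-(1/2:ℝ)) ≤ (K:ℝ) := Nat.le_ceil _
          have hkpos : (0:ℝ) < k := by
            have : (1:ℝ) ≤ (k:ℝ) := by exact_mod_cast hk
            linarith
          constructor
          · rw [hkeq]; positivity
          · rw [hkeq]
            have hd2 : (0:ℝ) < δ ^ ((1/2:ℝ)) := by positivity
            rw [div_le_iff₀ hkpos]
            have h1 : δ ^ ((1/2:ℝ)) * δ ^ (-(1/2:ℝ)) = 1 := by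
              rw [← Real.rpow_add hδ]; norm_num
            nlinarith
    rcases hcase with ⟨k, hk1, hkK, hkeq⟩ | hz0'
    · apply Set.mem_biUnion (show ((1:ℝ)/(k:ℝ), (j:ℝ)*l) ∈ C from ?_)
      · rw [mem_Sq]
        have hkpos : (0:ℝ) < k := by exact_mod_cast hk1
        refine ⟨⟨by rw [hkeq], by rw [hkeq]; simp; linarith⟩, hjmem.1, hjmem.2⟩
      · rw [hC]
        apply Finset.mem_union_left
        apply Finset.mem_image.mpr
        exact ⟨(k, j), by simp [Finset.mem_product, Finset.mem_Icc, hk1, hkK, hj], rfl⟩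
    · obtain ⟨i, hi, himem⟩ := exists_grid hlpos hmpos hz0'
        (by calc δ ^ ((1/2:ℝ)) ≤ (δ ^ ((1/2:ℝ)) / l) * l := by field_simp; norm_num
              _ ≤ m * l := mul_le_mul_of_nonneg_right (Nat.le_ceil _) hlpos.le)
      apply Set.mem_biUnion (show ((i:ℝ)*l, (j:ℝ)*l) ∈ C from ?_)
      · rw [mem_Sq]
        exact ⟨⟨himem.1, himem.2⟩, hjmem.1, hjmem.2⟩
      · rw [hC]
        apply Finset.mem_union_right
        apply Finset.mem_image.mpr
        exact ⟨(i, j), by simp [Finset.mem_product, hi, hj], rfl⟩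
  · -- sum bound
    have hcard : (C.card : ℝ) ≤ 20 * δ ^ (-(3/2:ℝ)) := by
      have h1 : C.card ≤ K * ny + m * ny := by
        calc C.card ≤ _ + _ := Finset.card_union_le _ _
          _ ≤ K * ny + m * ny := by
              gcongr <;> [skip; skip]
              · calc _ ≤ ((Finset.Icc 1 K) ×ˢ (Finset.range ny)).card := Finset.card_image_le
                  _ = K * ny := by simp [Finset.card_product]
              · calc _ ≤ ((Finset.range m) ×ˢ (Finset.range ny)).card := Finset.card_image_le
                  _ = m * ny := by simp [Finset.card_product]
      have h2 : (K:ℝ) ≤ 2 * δ ^ (-(1/2:ℝ)) := by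
        have := ceil_le_add_one (show (0:ℝ) ≤ δ ^ (-(1/2:ℝ)) by positivity)
        have := one_le_rpow_neg hδ hδ1 (show (0:ℝ) ≤ 1/2 by norm_num)
        rw [hK]; linarith
      have h3 : (m:ℝ) ≤ 3 * δ ^ (-(1/2:ℝ)) := by
        have hc := ceil_le_add_one (show (0:ℝ) ≤ δ ^ ((1/2:ℝ)) / l by positivity)
        have h1r : 1 ≤ δ ^ (-(1/2:ℝ)) := one_le_rpow_neg hδ hδ1 (by norm_num)
        have heq : δ ^ ((1/2:ℝ)) / l = Real.sqrt 2 * δ ^ (-(1/2:ℝ)) := by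
          rw [hl]
          rw [div_div_eq_mul_div, mul_comm, mul_div_assoc,
            show δ ^ ((1/2:ℝ)) / δ = δ ^ (-(1/2:ℝ)) by
              rw [show -(1/2:ℝ) = (1/2:ℝ) - 1 by norm_num, Real.rpow_sub hδ, Real.rpow_one]]
        have hs2 : Real.sqrt 2 ≤ 2 := by
          nlinarith [Real.sq_sqrt (show (0:ℝ) ≤ 2 by norm_num), Real.sqrt_nonneg 2]
        rw [hm]
        calc (⌈δ ^ ((1/2:ℝ)) / l⌉₊ : ℝ) ≤ δ ^ ((1/2:ℝ)) / l + 1 := hc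
          _ = Real.sqrt 2 * δ ^ (-(1/2:ℝ)) + 1 := by rw [heq]
          _ ≤ 2 * δ ^ (-(1/2:ℝ)) + δ ^ (-(1/2:ℝ)) := by nlinarith
          _ = 3 * δ ^ (-(1/2:ℝ)) := by ring
      have h4 : (ny:ℝ) ≤ 4 * δ ^ (-(1:ℝ)) := by
        have hc := ceil_le_add_one (show (0:ℝ) ≤ 2 / l by positivity)
        have h1r : 1 ≤ δ ^ (-(1:ℝ)) := one_le_rpow_neg hδ hδ1 (by norm_num)
        have heq : 2 / l = 2 * Real.sqrt 2 * δ ^ (-(1:ℝ)) := by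
          rw [hl, Real.rpow_neg_one]
          field_simp
        have hs2 : Real.sqrt 2 ≤ 3/2 := by
          nlinarith [Real.sq_sqrt (show (0:ℝ) ≤ 2 by norm_num), Real.sqrt_nonneg 2]
        rw [hny]
        calc (⌈2 / l⌉₊ : ℝ) ≤ 2 / l + 1 := hc
          _ = 2 * Real.sqrt 2 * δ ^ (-(1:ℝ)) + 1 := by rw [heq]
          _ ≤ 3 * δ ^ (-(1:ℝ)) + δ ^ (-(1:ℝ)) := by nlinarith
          _ = 4 * δ ^ (-(1:ℝ)) := by ring
      have hmul : δ ^ (-(1/2:ℝ)) * δ ^ (-(1:ℝ)) = δ ^ (-(3/2:ℝ)) := by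
        rw [← Real.rpow_add hδ]; norm_num
      calc (C.card : ℝ) ≤ ((K * ny + m * ny : ℕ) : ℝ) := by exact_mod_cast h1
        _ = (K:ℝ) * ny + (m:ℝ) * ny := by push_cast; ring
        _ ≤ (2 * δ ^ (-(1/2:ℝ))) * (4 * δ ^ (-(1:ℝ))) + (3 * δ ^ (-(1/2:ℝ))) * (4 * δ ^ (-(1:ℝ))) := by
            gcongr <;> positivity
        _ = 20 * (δ ^ (-(1/2:ℝ)) * δ ^ (-(1:ℝ))) := by ring
        _ = 20 * δ ^ (-(3/2:ℝ)) := by rw [hmul]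
    have hss : δ ^ s = δ ^ (3/2:ℝ) * δ ^ η := by
      rw [← Real.rpow_add hδ, hη]; ring_nf
    have hfin : 20 * δ ^ (-(3/2:ℝ)) * δ ^ s ≤ ε := by
      rw [hss]
      have h1 : δ ^ (-(3/2:ℝ)) * (δ ^ (3/2:ℝ) * δ ^ η) = δ ^ η := by
        rw [← mul_assoc, ← Real.rpow_add hδ]
        norm_num
      calc 20 * δ ^ (-(3/2:ℝ)) * (δ ^ (3/2:ℝ) * δ ^ η) = 20 * δ ^ η := by rw [mul_assoc, h1]
        _ ≤ 20 * (ε/20) := by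
            gcongr 20 * ?_
            calc δ ^ η ≤ ((ε/20) ^ η⁻¹) ^ η := rpow_le_of_base_le hδ.le hδε hη0.le
              _ = ε/20 := Real.rpow_inv_rpow (by positivity) (ne_of_gt hη0)
        _ = ε := by ring
    calc (C.card : ℝ) * δ ^ s ≤ 20 * δ ^ (-(3/2:ℝ)) * δ ^ s := by
          apply mul_le_mul_of_nonneg_right hcard (by positivity)
      _ ≤ ε := hfin
end P4
section P5
set_option maxHeartbeats 1000000

lemma sqrt2_le : Real.sqrt 2 ≤ 3/2 := by
  nlinarith [Real.sq_sqrt (show (0:ℝ) ≤ 2 by norm_num), Real.sqrt_nonneg 2]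

lemma icov_upper {θ s : ℝ} (hθ0 : 0 < θ) (hθ1 : θ ≤ 1) (hs : 1 + θ/(1+θ) < s) :
    ∀ ε > 0, ∃ δ₀ > (0:ℝ), ∀ δ : ℝ, 0 < δ → δ ≤ δ₀ →
      ICov Fprod s (δ ^ (1/θ)) δ ε := by
  intro ε hε
  have hθp : (0:ℝ) < 1 + θ := by linarith
  set a := 1/(1+θ) with ha
  have ha0 : 0 < a := by positivity
  have ha1 : a ≤ 1 := by rw [ha, div_le_one hθp]; linarith
  set η := s - (1 + θ/(1+θ)) with hη
  have hη0 : 0 < η := by simp only [hη]; linarith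
  refine ⟨min 1 ((ε/20) ^ η⁻¹), by positivity, ?_⟩
  intro δ hδ hδ₀
  have hδ1 : δ ≤ 1 := le_trans hδ₀ (min_le_left _ _)
  have hδε : δ ≤ (ε/20) ^ η⁻¹ := le_trans hδ₀ (min_le_right _ _)
  classical
  have hθinv : 1 ≤ 1/θ := by rw [le_div_iff₀ hθ0]; linarith
  have hflo : δ ^ (1/θ) ≤ δ := by
    calc δ ^ (1/θ) ≤ δ ^ (1:ℝ) := Real.rpow_le_rpow_of_exponent_ge hδ hδ1 hθinv
      _ = δ := Real.rpow_one δ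
  set lf := δ ^ (1/θ) / Real.sqrt 2 with hlf
  set lc := δ / Real.sqrt 2 with hlc
  have hlfpos : 0 < lf := by positivity
  have hlcpos : 0 < lc := by positivity
  have hlf2 : lf * Real.sqrt 2 = δ ^ (1/θ) := by rw [hlf]; field_simp
  have hlc2 : lc * Real.sqrt 2 = δ := by rw [hlc]; field_simp
  set N := ⌈δ ^ (-a)⌉₊ with hN
  set nf := ⌈2/lf⌉₊ with hnf
  set nx := ⌈δ ^ a / lc⌉₊ with hnx
  set ny := ⌈2/lc⌉₊ with hny
  have hNpos : 0 < N := Nat.ceil_pos.mpr (by positivity)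
  have hnfpos : 0 < nf := Nat.ceil_pos.mpr (by positivity)
  have hnxpos : 0 < nx := Nat.ceil_pos.mpr (by positivity)
  have hnypos : 0 < ny := Nat.ceil_pos.mpr (by positivity)
  set C1 : Finset (ℝ × ℝ × ℝ) :=
    ((Finset.Icc 1 N) ×ˢ (Finset.range nf)).image
      (fun p => ((1:ℝ)/(p.1:ℝ), (p.2:ℝ) * lf, lf)) with hC1
  set C2 : Finset (ℝ × ℝ × ℝ) :=
    ((Finset.range nx) ×ˢ (Finset.range ny)).image
      (fun p => ((p.1:ℝ) * lc, (p.2:ℝ) * lc, lc)) with hC2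
  apply ICov_of_sq (C1 ∪ C2)
  · -- cover
    intro z hz
    obtain ⟨hz0, hz1⟩ := hz
    have hz1' : z 1 ∈ Set.Icc (0:ℝ) 2 := Flog_sub hz1
    have hcase : (∃ k : ℕ, 1 ≤ k ∧ k ≤ N ∧ z 0 = 1/(k:ℝ)) ∨ z 0 ∈ Set.Icc 0 (δ ^ a) := by
      rcases hz0 with h | ⟨k, hk, hkeq⟩
      · right; rw [h]; exact ⟨le_refl 0, by positivity⟩
      · by_cases hkK : k ≤ N
        · exact Or.inl ⟨k, hk, hkK, hkeq⟩
        · right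
          push_neg at hkK
          have hkR : (N:ℝ) + 1 ≤ (k:ℝ) := by exact_mod_cast hkK
          have hKR : δ ^ (-a) ≤ (N:ℝ) := Nat.le_ceil _
          have hkpos : (0:ℝ) < k := by
            have : (1:ℝ) ≤ (k:ℝ) := by exact_mod_cast hk
            linarith
          refine ⟨by rw [hkeq]; positivity, ?_⟩
          rw [hkeq, div_le_iff₀ hkpos]
          have h1 : δ ^ a * δ ^ (-a) = 1 := by
            rw [← Real.rpow_add hδ]; norm_num
          have hd2 : (0:ℝ) < δ ^ a := by positivity
          nlinarith
    rcases hcase with ⟨k, hk1, hkK, hkeq⟩ | hz0'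
    · obtain ⟨j, hj, hjmem⟩ := exists_grid hlfpos hnfpos hz1'
        (by calc (2:ℝ) ≤ (2/lf) * lf := by field_simp; norm_num
              _ ≤ nf * lf := mul_le_mul_of_nonneg_right (Nat.le_ceil _) hlfpos.le)
      apply Set.mem_biUnion
        (show ((1:ℝ)/(k:ℝ), (j:ℝ)*lf, lf) ∈ C1 ∪ C2 from ?_)
      · rw [mem_Sq]
        have hkpos : (0:ℝ) < k := by exact_mod_cast hk1
        exact ⟨⟨by rw [hkeq], by rw [hkeq]; linarith⟩, hjmem.1, hjmem.2⟩
      · apply Finset.mem_union_left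
        rw [hC1]
        apply Finset.mem_image.mpr
        exact ⟨(k, j), by simp [Finset.mem_product, Finset.mem_Icc, hk1, hkK, hj], rfl⟩
    · obtain ⟨j, hj, hjmem⟩ := exists_grid hlcpos hnypos hz1'
        (by calc (2:ℝ) ≤ (2/lc) * lc := by field_simp; norm_num
              _ ≤ ny * lc := mul_le_mul_of_nonneg_right (Nat.le_ceil _) hlcpos.le)
      obtain ⟨i, hi, himem⟩ := exists_grid hlcpos hnxpos hz0'
        (by calc δ ^ a ≤ (δ ^ a / lc) * lc := by field_simp; norm_num
              _ ≤ nx * lc := mul_le_mul_of_nonneg_right (Nat.le_ceil _) hlcpos.le)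
      apply Set.mem_biUnion (show ((i:ℝ)*lc, (j:ℝ)*lc, lc) ∈ C1 ∪ C2 from ?_)
      · rw [mem_Sq]
        exact ⟨⟨himem.1, himem.2⟩, hjmem.1, hjmem.2⟩
      · apply Finset.mem_union_right
        rw [hC2]
        apply Finset.mem_image.mpr
        exact ⟨(i, j), by simp [Finset.mem_product, hi, hj], rfl⟩
  · -- diameters
    intro c hc
    rcases Finset.mem_union.mp hc with h | h
    · rw [hC1] at h
      obtain ⟨p, _, rfl⟩ := Finset.mem_image.mp h
      simp only
      rw [hlf2]
      exact ⟨hlfpos, le_refl _, hflo⟩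
    · rw [hC2] at h
      obtain ⟨p, _, rfl⟩ := Finset.mem_image.mp h
      simp only
      rw [hlc2]
      exact ⟨hlcpos, hflo, le_refl _⟩
  · -- sum
    have hterm : ∀ c ∈ C1 ∪ C2, (0:ℝ) ≤ (c.2.2 * Real.sqrt 2) ^ s := by
      intro c hc
      rcases Finset.mem_union.mp hc with h | h
      · obtain ⟨p, _, rfl⟩ := Finset.mem_image.mp h
        simp only; rw [hlf2]; positivity
      · obtain ⟨p, _, rfl⟩ := Finset.mem_image.mp h
        simp only; rw [hlc2]; positivity
    have hsplit : ∑ c ∈ C1 ∪ C2, (c.2.2 * Real.sqrt 2) ^ s ≤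
        ∑ c ∈ C1, (c.2.2 * Real.sqrt 2) ^ s + ∑ c ∈ C2, (c.2.2 * Real.sqrt 2) ^ s := by
      have := Finset.sum_union_inter (s₁ := C1) (s₂ := C2)
        (f := fun c => (c.2.2 * Real.sqrt 2) ^ s)
      have hpos : 0 ≤ ∑ c ∈ C1 ∩ C2, (c.2.2 * Real.sqrt 2) ^ s := by
        apply Finset.sum_nonneg
        intro c hc
        exact hterm c (Finset.mem_union_left _ (Finset.mem_inter.mp hc).1)
      linarith
    have hsum1 : ∑ c ∈ C1, (c.2.2 * Real.sqrt 2) ^ s ≤ (N * nf : ℕ) * δ ^ (s/θ) := by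
      have : ∀ c ∈ C1, (c.2.2 * Real.sqrt 2) ^ s = δ ^ (s/θ) := by
        intro c hc
        obtain ⟨p, _, rfl⟩ := Finset.mem_image.mp hc
        simp only
        rw [hlf2, ← Real.rpow_mul hδ.le]
        congr 1; ring
      rw [Finset.sum_congr rfl this, Finset.sum_const, nsmul_eq_mul]
      apply mul_le_mul_of_nonneg_right _ (by positivity)
      have : C1.card ≤ N * nf := by
        calc C1.card ≤ ((Finset.Icc 1 N) ×ˢ (Finset.range nf)).card := Finset.card_image_le
          _ = N * nf := by simp [Finset.card_product]
      exact_mod_cast this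
    have hsum2 : ∑ c ∈ C2, (c.2.2 * Real.sqrt 2) ^ s ≤ (nx * ny : ℕ) * δ ^ s := by
      have : ∀ c ∈ C2, (c.2.2 * Real.sqrt 2) ^ s = δ ^ s := by
        intro c hc
        obtain ⟨p, _, rfl⟩ := Finset.mem_image.mp hc
        simp only
        rw [hlc2]
      rw [Finset.sum_congr rfl this, Finset.sum_const, nsmul_eq_mul]
      apply mul_le_mul_of_nonneg_right _ (by positivity)
      have : C2.card ≤ nx * ny := by
        calc C2.card ≤ ((Finset.range nx) ×ˢ (Finset.range ny)).card := Finset.card_image_le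
          _ = nx * ny := by simp [Finset.card_product]
      exact_mod_cast this
    -- numeric bounds
    have hs2 := sqrt2_le
    have hN2 : (N:ℝ) ≤ 2 * δ ^ (-a) := by
      have h1 := ceil_le_add_one (show (0:ℝ) ≤ δ ^ (-a) by positivity)
      have h2 := one_le_rpow_neg hδ hδ1 ha0.le
      rw [hN]; linarith
    have hnf2 : (nf:ℝ) ≤ 4 * δ ^ (-(1/θ)) := by
      have h1 := ceil_le_add_one (show (0:ℝ) ≤ 2/lf by positivity)
      have h2 : 1 ≤ δ ^ (-(1/θ)) := one_le_rpow_neg hδ hδ1 (by positivity)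
      have heq : 2/lf = 2 * Real.sqrt 2 * δ ^ (-(1/θ)) := by
        rw [hlf, Real.rpow_neg hδ.le]
        field_simp
      rw [hnf]
      calc (⌈2/lf⌉₊:ℝ) ≤ 2/lf + 1 := h1
        _ = 2 * Real.sqrt 2 * δ ^ (-(1/θ)) + 1 := by rw [heq]
        _ ≤ 3 * δ ^ (-(1/θ)) + δ ^ (-(1/θ)) := by nlinarith
        _ = 4 * δ ^ (-(1/θ)) := by ring
    have hnx2 : (nx:ℝ) ≤ 3 * δ ^ (a - 1) := by
      have h1 := ceil_le_add_one (show (0:ℝ) ≤ δ ^ a / lc by positivity)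
      have h2 : 1 ≤ δ ^ (a - 1) := by
        have : a - 1 = -(1 - a) := by ring
        rw [this]
        exact one_le_rpow_neg hδ hδ1 (by linarith)
      have heq : δ ^ a / lc = Real.sqrt 2 * δ ^ (a - 1) := by
        rw [hlc, div_div_eq_mul_div, mul_comm, mul_div_assoc,
          show δ ^ a / δ = δ ^ (a - 1) by rw [Real.rpow_sub hδ, Real.rpow_one]]
      rw [hnx]
      calc (⌈δ ^ a / lc⌉₊:ℝ) ≤ δ ^ a / lc + 1 := h1
        _ = Real.sqrt 2 * δ ^ (a - 1) + 1 := by rw [heq]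
        _ ≤ 2 * δ ^ (a - 1) + δ ^ (a - 1) := by nlinarith
        _ = 3 * δ ^ (a - 1) := by ring
    have hny2 : (ny:ℝ) ≤ 4 * δ ^ (-(1:ℝ)) := by
      have h1 := ceil_le_add_one (show (0:ℝ) ≤ 2/lc by positivity)
      have h2 : 1 ≤ δ ^ (-(1:ℝ)) := one_le_rpow_neg hδ hδ1 (by norm_num)
      have heq : 2/lc = 2 * Real.sqrt 2 * δ ^ (-(1:ℝ)) := by
        rw [hlc, Real.rpow_neg_one]
        field_simp
      rw [hny]
      calc (⌈2/lc⌉₊:ℝ) ≤ 2/lc + 1 := h1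
        _ = 2 * Real.sqrt 2 * δ ^ (-(1:ℝ)) + 1 := by rw [heq]
        _ ≤ 3 * δ ^ (-(1:ℝ)) + δ ^ (-(1:ℝ)) := by nlinarith
        _ = 4 * δ ^ (-(1:ℝ)) := by ring
    have hterm1 : ((N * nf : ℕ):ℝ) * δ ^ (s/θ) ≤ 8 * δ ^ (η/θ) := by
      have key : δ ^ (-a) * δ ^ (-(1/θ)) * δ ^ (s/θ) = δ ^ (η/θ) := by
        rw [← Real.rpow_add hδ, ← Real.rpow_add hδ]
        congr 1
        rw [hη, ha]
        field_simp
        ring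
      calc ((N * nf : ℕ):ℝ) * δ ^ (s/θ) = (N:ℝ) * (nf:ℝ) * δ ^ (s/θ) := by push_cast; ring
        _ ≤ (2 * δ ^ (-a)) * (4 * δ ^ (-(1/θ))) * δ ^ (s/θ) := by
            apply mul_le_mul_of_nonneg_right _ (by positivity)
            apply mul_le_mul hN2 hnf2 (by positivity) (by positivity)
        _ = 8 * (δ ^ (-a) * δ ^ (-(1/θ)) * δ ^ (s/θ)) := by ring
        _ = 8 * δ ^ (η/θ) := by rw [key]
    have hterm2 : ((nx * ny : ℕ):ℝ) * δ ^ s ≤ 12 * δ ^ η := by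
      have key : δ ^ (a-1) * δ ^ (-(1:ℝ)) * δ ^ s = δ ^ η := by
        rw [← Real.rpow_add hδ, ← Real.rpow_add hδ]
        congr 1
        rw [hη, ha]
        field_simp
        ring
      calc ((nx * ny : ℕ):ℝ) * δ ^ s = (nx:ℝ) * (ny:ℝ) * δ ^ s := by push_cast; ring
        _ ≤ (3 * δ ^ (a-1)) * (4 * δ ^ (-(1:ℝ))) * δ ^ s := by
            apply mul_le_mul_of_nonneg_right _ (by positivity)
            apply mul_le_mul hnx2 hny2 (by positivity) (by positivity)
        _ = 12 * (δ ^ (a-1) * δ ^ (-(1:ℝ)) * δ ^ s) := by ring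
        _ = 12 * δ ^ η := by rw [key]
    have hratio : δ ^ (η/θ) ≤ δ ^ η := by
      apply Real.rpow_le_rpow_of_exponent_ge hδ hδ1
      rw [le_div_iff₀ hθ0]
      nlinarith
    have hfin : δ ^ η ≤ ε/20 := by
      calc δ ^ η ≤ ((ε/20) ^ η⁻¹) ^ η := rpow_le_of_base_le hδ.le hδε hη0.le
        _ = ε/20 := Real.rpow_inv_rpow (by positivity) (ne_of_gt hη0)
    calc ∑ c ∈ C1 ∪ C2, (c.2.2 * Real.sqrt 2) ^ s
        ≤ ∑ c ∈ C1, _ + ∑ c ∈ C2, _ := hsplit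
      _ ≤ (N * nf : ℕ) * δ ^ (s/θ) + (nx * ny : ℕ) * δ ^ s := add_le_add hsum1 hsum2
      _ ≤ 8 * δ ^ (η/θ) + 12 * δ ^ η := add_le_add hterm1 hterm2
      _ ≤ 8 * δ ^ η + 12 * δ ^ η := by linarith
      _ = 20 * δ ^ η := by ring
      _ ≤ 20 * (ε/20) := by linarith
      _ = ε := by ring
end P5
section P6
set_option maxHeartbeats 1000000
open scoped Classical

lemma card_le_of_sep (S : Finset ℝ) {sep r : ℝ} (hsep : 0 < sep) (hr : 0 ≤ r)
    (h1 : ∀ a ∈ S, ∀ b ∈ S, a ≠ b → sep ≤ |a - b|)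
    (h2 : ∀ a ∈ S, ∀ b ∈ S, |a - b| ≤ r) : (S.card : ℝ) ≤ r / sep + 1 := by
  classical
  rcases S.eq_empty_or_nonempty with rfl | hne
  · simp; positivity
  set m := S.min' hne with hm
  have hmS : m ∈ S := S.min'_mem hne
  have key : ∀ a ∈ S, (fun a => ⌊(a - m)/sep⌋₊) a ∈ Finset.range (⌊r/sep⌋₊ + 1) := by
    intro a ha
    simp only [Finset.mem_range, Nat.lt_succ_iff]
    apply Nat.floor_le_floor
    apply div_le_div_of_nonneg_right _ hsep.le
    calc a - m ≤ |a - m| := le_abs_self _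
      _ ≤ r := h2 a ha m hmS
  have hinj : Set.InjOn (fun a => ⌊(a - m)/sep⌋₊) S := by
    have haux : ∀ a ∈ S, ∀ b ∈ S, a < b → ⌊(a - m)/sep⌋₊ < ⌊(b - m)/sep⌋₊ := by
      intro a ha b hb hab
      have hsepab : sep ≤ b - a := by
        have := h1 a ha b hb (ne_of_lt hab)
        rwa [abs_sub_comm, abs_of_pos (by linarith)] at this
      have ham : 0 ≤ a - m := by linarith [S.min'_le a ha]
      have hstep : (a - m)/sep + 1 ≤ (b - m)/sep := by
        rw [div_add' _ _ _ (ne_of_gt hsep)]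
        apply div_le_div_of_nonneg_right _ hsep.le
        linarith
      calc ⌊(a - m)/sep⌋₊ < ⌊(a - m)/sep⌋₊ + 1 := Nat.lt_succ_self _
        _ ≤ ⌊(b - m)/sep⌋₊ := by
            apply Nat.le_floor
            push_cast
            calc (⌊(a - m)/sep⌋₊ : ℝ) + 1 ≤ (a - m)/sep + 1 :=
                  add_le_add_left (Nat.floor_le (by positivity)) 1
              _ ≤ (b - m)/sep := hstep
    intro a ha b hb hab
    by_contra hne'
    rcases lt_or_gt_of_ne hne' with h | h
    · exact absurd hab (ne_of_lt (haux a ha b hb h))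
    · exact absurd hab.symm (ne_of_lt (haux b hb a ha h))
  have hcard : S.card ≤ ⌊r/sep⌋₊ + 1 := by
    calc S.card = (S.image (fun a => ⌊(a - m)/sep⌋₊)).card :=
          (Finset.card_image_of_injOn hinj).symm
      _ ≤ (Finset.range (⌊r/sep⌋₊ + 1)).card := by
          apply Finset.card_le_card
          intro x hx
          obtain ⟨a, ha, rfl⟩ := Finset.mem_image.mp hx
          exact key a ha
      _ = ⌊r/sep⌋₊ + 1 := Finset.card_range _
  calc (S.card : ℝ) ≤ (⌊r/sep⌋₊ : ℝ) + 1 := by exact_mod_cast hcard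
    _ ≤ r/sep + 1 := add_le_add_left (Nat.floor_le (by positivity)) 1

lemma count2D {U : Set (EuclideanSpace ℝ (Fin 2))} {r sx sy : ℝ} (X Y : Finset ℝ)
    (hU : ∀ p ∈ U, ∀ q ∈ U, dist p q ≤ r) (hr : 0 ≤ r) (hsx : 0 < sx) (hsy : 0 < sy)
    (hX : ∀ a ∈ X, ∀ b ∈ X, a ≠ b → sx ≤ |a - b|)
    (hY : ∀ a ∈ Y, ∀ b ∈ Y, a ≠ b → sy ≤ |a - b|) :
    ((Finset.filter (fun p : ℝ × ℝ => pt p.1 p.2 ∈ U) (X ×ˢ Y)).card : ℝ)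
      ≤ (r/sx + 1) * (r/sy + 1) := by
  classical
  set X1 := X.filter (fun x => ∃ y ∈ Y, pt x y ∈ U) with hX1
  set Y1 := Y.filter (fun y => ∃ x ∈ X, pt x y ∈ U) with hY1
  have hsub : (Finset.filter (fun p : ℝ × ℝ => pt p.1 p.2 ∈ U) (X ×ˢ Y)) ⊆ X1 ×ˢ Y1 := by
    intro p hp
    rw [Finset.mem_filter, Finset.mem_product] at hp
    obtain ⟨⟨hpx, hpy⟩, hpU⟩ := hp
    rw [Finset.mem_product, hX1, hY1, Finset.mem_filter, Finset.mem_filter]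
    exact ⟨⟨hpx, p.2, hpy, hpU⟩, hpy, p.1, hpx, hpU⟩
  have hX1b : (X1.card : ℝ) ≤ r/sx + 1 := by
    apply card_le_of_sep X1 hsx hr
    · intro a ha b hb hab
      exact hX a (Finset.mem_of_mem_filter a ha) b (Finset.mem_of_mem_filter b hb) hab
    · intro a ha b hb
      rw [hX1, Finset.mem_filter] at ha hb
      obtain ⟨_, ya, _, hya⟩ := ha
      obtain ⟨_, yb, _, hyb⟩ := hb
      calc |a - b| = |pt a ya 0 - pt b yb 0| := rfl
        _ ≤ dist (pt a ya) (pt b yb) := coord0_le_dist _ _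
        _ ≤ r := hU _ hya _ hyb
  have hY1b : (Y1.card : ℝ) ≤ r/sy + 1 := by
    apply card_le_of_sep Y1 hsy hr
    · intro a ha b hb hab
      exact hY a (Finset.mem_of_mem_filter a ha) b (Finset.mem_of_mem_filter b hb) hab
    · intro a ha b hb
      rw [hY1, Finset.mem_filter] at ha hb
      obtain ⟨_, xa, _, hxa⟩ := ha
      obtain ⟨_, xb, _, hxb⟩ := hb
      calc |a - b| = |pt xa a 1 - pt xb b 1| := rfl
        _ ≤ dist (pt xa a) (pt xb b) := coord1_le_dist _ _
        _ ≤ r := hU _ hxa _ hxb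
  calc ((Finset.filter (fun p : ℝ × ℝ => pt p.1 p.2 ∈ U) (X ×ˢ Y)).card : ℝ)
      ≤ ((X1 ×ˢ Y1).card : ℝ) := by exact_mod_cast Finset.card_le_card hsub
    _ = (X1.card : ℝ) * (Y1.card : ℝ) := by rw [Finset.card_product]; push_cast; ring
    _ ≤ (r/sx + 1) * (r/sy + 1) := by
        apply mul_le_mul hX1b hY1b (by positivity) (by positivity)

lemma tsum_count_ge {ι : Type} [Countable ι] (U : ι → Set (EuclideanSpace ℝ (Fin 2)))
    (P : Finset (ℝ × ℝ)) (hP : ∀ p ∈ P, ∃ i, pt p.1 p.2 ∈ U i) :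
    (P.card : ENNReal) ≤ ∑' i, ((Finset.filter (fun p : ℝ × ℝ => pt p.1 p.2 ∈ U i) P).card : ENNReal) := by
  classical
  rcases P.eq_empty_or_nonempty with rfl | hne
  · simp
  obtain ⟨p₀, hp₀⟩ := hne
  obtain ⟨i₀, _⟩ := hP p₀ hp₀
  have : Nonempty ι := ⟨i₀⟩
  set g : ℝ × ℝ → ι := fun p => if h : ∃ i, pt p.1 p.2 ∈ U i then h.choose else i₀ with hg
  have hgspec : ∀ p ∈ P, pt p.1 p.2 ∈ U (g p) := by
    intro p hp
    have h := hP p hp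
    simp only [hg, dif_pos h]
    exact h.choose_spec
  set T := P.image g with hT
  have hcards : P.card = ∑ i ∈ T, (Finset.filter (fun p => g p = i) P).card :=
    Finset.card_eq_sum_card_fiberwise (fun p hp => Finset.mem_image_of_mem g hp)
  have hfib : ∀ i ∈ T, (Finset.filter (fun p => g p = i) P).card
      ≤ (Finset.filter (fun p : ℝ × ℝ => pt p.1 p.2 ∈ U i) P).card := by
    intro i _
    apply Finset.card_le_card
    intro p hp
    rw [Finset.mem_filter] at hp ⊢
    exact ⟨hp.1, hp.2 ▸ hgspec p hp.1⟩
  calc (P.card : ENNReal) = ∑ i ∈ T, ((Finset.filter (fun p => g p = i) P).card : ENNReal) := by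
        rw [hcards]; push_cast; rfl
    _ ≤ ∑ i ∈ T, ((Finset.filter (fun p : ℝ × ℝ => pt p.1 p.2 ∈ U i) P).card : ENNReal) := by
        apply Finset.sum_le_sum
        intro i hi
        exact_mod_cast hfib i hi
    _ ≤ ∑' i, ((Finset.filter (fun p : ℝ × ℝ => pt p.1 p.2 ∈ U i) P).card : ENNReal) :=
        ENNReal.sum_le_tsum T
end P6
section P7
set_option maxHeartbeats 1600000
open scoped Classical

lemma log_le_rpow {x c : ℝ} (hx : 1 ≤ x) (hc : 0 < c) : Real.log x ≤ x ^ c / c := by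
  have hx0 : 0 < x := by linarith
  have h1 : Real.log (x ^ c) ≤ x ^ c := by
    have h2 := Real.log_le_sub_one_of_pos (show (0:ℝ) < x ^ c by positivity)
    linarith
  rw [Real.log_rpow hx0] at h1
  rw [le_div_iff₀ hc]
  linarith [h1]

lemma sepX (N : ℕ) (hN : 1 ≤ N) :
    ∃ X : Finset ℝ, (↑X ⊆ F1) ∧ X.card = N ∧
      (∀ a ∈ X, ∀ b ∈ X, a ≠ b → 1/(4*(N:ℝ)^2) ≤ |a - b|) := by
  have hNR : (1:ℝ) ≤ (N:ℝ) := by exact_mod_cast hN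
  have hsep : ∀ k k' : ℕ, k ∈ Finset.Ioc N (2*N) → k' ∈ Finset.Ioc N (2*N) → k < k' →
      1/(4*(N:ℝ)^2) ≤ 1/(k:ℝ) - 1/(k':ℝ) := by
    intro k k' hk hk' hlt
    rw [Finset.mem_Ioc] at hk hk'
    have hk0 : (0:ℝ) < (k:ℝ) := by exact_mod_cast (by omega : 0 < k)
    have hk'0 : (0:ℝ) < (k':ℝ) := by exact_mod_cast (by omega : 0 < k')
    have h1 : (1:ℝ) ≤ (k':ℝ) - (k:ℝ) := by
      have : k + 1 ≤ k' := hlt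
      have := (show ((k:ℝ)+1) ≤ (k':ℝ) by exact_mod_cast this)
      linarith
    have h2 : (k:ℝ) * (k':ℝ) ≤ 4*(N:ℝ)^2 := by
      have hkb : (k:ℝ) ≤ 2*(N:ℝ) := by exact_mod_cast hk.2
      have hk'b : (k':ℝ) ≤ 2*(N:ℝ) := by exact_mod_cast hk'.2
      nlinarith
    have heq : 1/(k:ℝ) - 1/(k':ℝ) = ((k':ℝ) - (k:ℝ))/((k:ℝ)*(k':ℝ)) := by
      field_simp
    rw [heq]
    have hNp : (0:ℝ) < 4*(N:ℝ)^2 := by positivity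
    rw [div_le_div_iff₀ hNp (by positivity)]
    nlinarith
  refine ⟨(Finset.Ioc N (2*N)).image (fun k : ℕ => 1/(k:ℝ)), ?_, ?_, ?_⟩
  · intro x hx
    simp only [Finset.coe_image, Set.mem_image, Finset.mem_coe, Finset.mem_Ioc] at hx
    obtain ⟨k, ⟨hk1, _⟩, rfl⟩ := hx
    exact Or.inr ⟨k, by omega, rfl⟩
  · rw [Finset.card_image_of_injOn, Nat.card_Ioc]
    · omega
    · intro a ha b hb hab
      simp only [Finset.coe_Ioc, Set.mem_Ioc] at ha hb
      have ha0 : (0:ℝ) < (a:ℝ) := by exact_mod_cast (by omega : 0 < a)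
      have hb0 : (0:ℝ) < (b:ℝ) := by exact_mod_cast (by omega : 0 < b)
      field_simp at hab
      exact_mod_cast hab.symm
  · intro x hx y hy hxy
    have hpos : (0:ℝ) < 1/(4*(N:ℝ)^2) := by positivity
    simp only [Finset.mem_image] at hx hy
    obtain ⟨k, hk, rfl⟩ := hx
    obtain ⟨k', hk', rfl⟩ := hy
    have hkk' : k ≠ k' := by
      intro h; exact hxy (by rw [h])
    rcases lt_or_gt_of_ne hkk' with h | h
    · have := hsep k k' hk hk' h
      rw [abs_of_nonneg (by linarith)]
      linarith
    · have := hsep k' k hk' hk h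
      rw [abs_sub_comm, abs_of_nonneg (by linarith)]
      linarith

lemma sepLog {r b : ℝ} (hb : 0 < b) (hb2 : b ≤ 1/2) (hr : 0 < r) (hr64 : r ≤ 1/64) :
    ∃ Y : Finset ℝ, (↑Y ⊆ Flog ∩ Set.Icc (0:ℝ) 1) ∧
      (∀ a ∈ Y, ∀ c ∈ Y, a ≠ c → r ≤ |a - c|) ∧ (b/4) * r^(b-1) ≤ (Y.card : ℝ) := by
  have hrinv : (64:ℝ) ≤ 1/r := by
    rw [le_div_iff₀ hr]; linarith [hr64]
  have hrinv1 : (1:ℝ) ≤ 1/r := by linarith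
  set L := Real.log (1/r) with hL
  have hL3 : (3:ℝ) ≤ L := by
    have h1 : Real.log 64 ≤ L := Real.log_le_log (by norm_num) hrinv
    have h2 : Real.log 64 = 6 * Real.log 2 := by
      rw [show (64:ℝ) = 2^(6:ℕ) by norm_num, Real.log_pow]
      push_cast; ring
    have := log2_ge
    rw [h2] at h1
    linarith
  have hLpos : (0:ℝ) < L := by linarith
  have hexpL : Real.exp L = 1/r := Real.exp_log (by positivity)
  set T := 1/L with hT
  have hT3 : T ≤ 1/3 := by
    rw [hT, div_le_div_iff₀ hLpos (by norm_num)]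
    linarith
  have hTpos : 0 < T := by positivity
  -- L is not too large : 4 r L ≤ 8 sqrt r ≤ 1
  have hLle : L ≤ 2 * (1/r) ^ ((1/2:ℝ)) := by
    have := log_le_rpow hrinv1 (show (0:ℝ) < 1/2 by norm_num)
    rw [hL]
    calc Real.log (1/r) ≤ (1/r) ^ ((1/2:ℝ)) / (1/2) := this
      _ = 2 * (1/r) ^ ((1/2:ℝ)) := by ring
  have hrL : 4 * r * L ≤ 1 := by
    have h1 : r * (1/r) ^ ((1/2:ℝ)) = r ^ ((1/2:ℝ)) := by
      have hinv : (1/r) ^ ((1/2:ℝ)) = r ^ (-(1/2:ℝ)) := by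
        rw [one_div, ← Real.rpow_neg_one r, ← Real.rpow_mul hr.le]
        norm_num
      calc r * (1/r) ^ ((1/2:ℝ)) = r ^ (1:ℝ) * r ^ (-(1/2:ℝ)) := by rw [hinv, Real.rpow_one]
        _ = r ^ ((1/2:ℝ)) := by rw [← Real.rpow_add hr]; norm_num
    have h2 : r ^ ((1/2:ℝ)) ≤ (1/64:ℝ) ^ ((1/2:ℝ)) := Real.rpow_le_rpow hr.le hr64 (by norm_num)
    have h3 : ((1/64:ℝ)) ^ ((1/2:ℝ)) = 1/8 := by
      rw [show (1/64:ℝ) = (1/8)^(2:ℕ) by norm_num, ← Real.rpow_natCast ((1/8:ℝ)) 2,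
        ← Real.rpow_mul (by norm_num)]
      norm_num
    calc 4 * r * L ≤ 4 * r * (2 * (1/r) ^ ((1/2:ℝ))) := by
          apply mul_le_mul_of_nonneg_left hLle (by positivity)
      _ = 8 * (r * (1/r) ^ ((1/2:ℝ))) := by ring
      _ = 8 * r ^ ((1/2:ℝ)) := by rw [h1]
      _ ≤ 8 * (1/8) := by rw [← h3]; linarith [h2]
      _ = 1 := by norm_num
  set J := ⌊T/(2*r)⌋₊ with hJ
  have hJlb : T/(2*r) - 1 ≤ (J:ℝ) := by
    have := Nat.lt_floor_add_one (T/(2*r))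
    rw [hJ]; linarith
  have hT4r : 1 ≤ T/(4*r) := by
    rw [hT, le_div_iff₀ (by positivity), le_div_iff₀ hLpos]
    linarith [hrL]
  have hJT4 : T/(4*r) ≤ (J:ℝ) := by
    have h : T/(2*r) = T/(4*r) + T/(4*r) := by ring
    linarith
  have hJ1 : (1:ℝ) ≤ (J:ℝ) := le_trans hT4r hJT4
  -- the points
  set t : ℕ → ℝ := fun j => 2*r*(j:ℝ) with ht
  set mm : ℕ → ℕ := fun j => ⌈Real.exp (1/(t j))⌉₊ with hmm
  set p : ℕ → ℝ := fun j => 1 / Real.log (mm j) with hp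
  have htpos : ∀ j : ℕ, 1 ≤ j → 0 < t j := by
    intro j hj
    have : (1:ℝ) ≤ (j:ℝ) := by exact_mod_cast hj
    show (0:ℝ) < 2*r*(j:ℝ)
    positivity
  have htT : ∀ j : ℕ, j ≤ J → t j ≤ T := by
    intro j hj
    have h1 : (j:ℝ) ≤ (J:ℝ) := by exact_mod_cast hj
    have h2 : (J:ℝ) ≤ T/(2*r) := Nat.floor_le (by positivity)
    show 2*r*(j:ℝ) ≤ T
    rw [show 2*r*(j:ℝ) = (j:ℝ)*(2*r) by ring]
    calc (j:ℝ)*(2*r) ≤ (T/(2*r))*(2*r) := by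
          apply mul_le_mul_of_nonneg_right (le_trans h1 h2) (by positivity)
      _ = T := by field_simp
  have hkey : ∀ j : ℕ, 1 ≤ j → j ≤ J →
      2 ≤ mm j ∧ t j - r ≤ p j ∧ p j ≤ t j := by
    intro j hj1 hjJ
    have htj := htpos j hj1
    have htjT := htT j hjJ
    have hinvt : L ≤ 1/(t j) := by
      rw [le_div_iff₀ htj]
      calc L * t j ≤ L * T := by apply mul_le_mul_of_nonneg_left htjT hLpos.le
        _ = 1 := by rw [hT]; field_simp
    have hexp_ge : 1/r ≤ Real.exp (1/(t j)) := by
      rw [← hexpL]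
      exact Real.exp_le_exp.mpr hinvt
    have hm2 : 2 ≤ mm j := by
      rw [hmm]
      have : (1:ℝ) < Real.exp (1/(t j)) := by linarith
      exact (by exact_mod_cast Nat.lt_ceil.mpr (by push_cast; linarith) : (1:ℕ) < ⌈Real.exp (1/(t j))⌉₊)
    have hmge : Real.exp (1/(t j)) ≤ (mm j : ℝ) := Nat.le_ceil _
    have hlog_ge : 1/(t j) ≤ Real.log (mm j) := by
      calc 1/(t j) = Real.log (Real.exp (1/(t j))) := (Real.log_exp _).symm
        _ ≤ Real.log (mm j) := Real.log_le_log (Real.exp_pos _) hmge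
    have hlogpos : 0 < Real.log (mm j) := lt_of_lt_of_le (by positivity) hlog_ge
    have hub : p j ≤ t j := by
      rw [hp]
      rw [div_le_iff₀ hlogpos]
      rw [← div_le_iff₀' htj]
      exact hlog_ge
    have hmle : (mm j : ℝ) ≤ Real.exp (1/(t j)) + 1 := by
      rw [hmm]
      exact (Nat.ceil_lt_add_one (Real.exp_pos _).le).le
    have hlog_le : Real.log (mm j) ≤ 1/(t j) + r := by
      have hstep : Real.log ((mm j : ℝ)) ≤ Real.log (Real.exp (1/(t j)) + 1) := by
        apply Real.log_le_log (by positivity) hmle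
      have hsplit : Real.exp (1/(t j)) + 1
          = Real.exp (1/(t j)) * (1 + Real.exp (-(1/(t j)))) := by
        rw [mul_add, mul_one, ← Real.exp_add]
        simp
      have h2 : Real.log (Real.exp (1/(t j)) + 1)
          = 1/(t j) + Real.log (1 + Real.exp (-(1/(t j)))) := by
        rw [hsplit, Real.log_mul (by positivity) (by positivity), Real.log_exp]
      have h3 : Real.log (1 + Real.exp (-(1/(t j)))) ≤ Real.exp (-(1/(t j))) := by
        have := Real.log_le_sub_one_of_pos (show (0:ℝ) < 1 + Real.exp (-(1/(t j))) by positivity)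
        linarith
      have h4 : Real.exp (-(1/(t j))) ≤ r := by
        calc Real.exp (-(1/(t j))) ≤ Real.exp (-L) := by
              apply Real.exp_le_exp.mpr; linarith
          _ = r := by
              rw [← Real.exp_log hr]
              congr 1
              rw [hL, ← Real.log_inv]
              congr 1
              field_simp
        
      linarith [hstep, h2 ▸ hstep]
    have hlb : t j - r ≤ p j := by
      have hmid : 1/(1/(t j) + r) ≤ p j := by
        rw [hp]
        exact one_div_le_one_div_of_le hlogpos hlog_le
      have hu3 : 3 ≤ 1/(t j) := le_trans hL3 hinvt
      have htu : t j * (1/(t j)) = 1 := by field_simp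
      have hfirst : (t j - r) * (1/(t j) + r) ≤ 1 := by nlinarith
      have hlast : t j - r ≤ 1/(1/(t j) + r) := by
        rw [le_div_iff₀ (by positivity)]
        linarith
      linarith
    exact ⟨hm2, hlb, hub⟩
  have hmono : ∀ i j : ℕ, 1 ≤ i → i ≤ J → 1 ≤ j → j ≤ J → i < j → p i + r ≤ p j := by
    intro i j hi1 hiJ hj1 hjJ hij
    obtain ⟨_, _, hpi_ub⟩ := hkey i hi1 hiJ
    obtain ⟨_, hpj_lb, _⟩ := hkey j hj1 hjJ
    have hcast : (i:ℝ) + 1 ≤ (j:ℝ) := by exact_mod_cast hij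
    have : t i + 2*r ≤ t j := by
      show 2*r*(i:ℝ) + 2*r ≤ 2*r*(j:ℝ)
      nlinarith
    linarith
  refine ⟨(Finset.Icc 1 J).image p, ?_, ?_, ?_⟩
  · intro x hx
    simp only [Finset.coe_image, Set.mem_image, Finset.mem_coe, Finset.mem_Icc] at hx
    obtain ⟨j, ⟨hj1, hjJ⟩, rfl⟩ := hx
    obtain ⟨hm2, hlb, hub⟩ := hkey j hj1 hjJ
    have htj := htpos j hj1
    have h2r : 2*r ≤ t j := by
      have : (1:ℝ) ≤ (j:ℝ) := by exact_mod_cast hj1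
      show 2*r ≤ 2*r*(j:ℝ)
      nlinarith
    constructor
    · exact Or.inr ⟨mm j, hm2, rfl⟩
    · constructor
      · linarith
      · linarith [htT j hjJ, hT3]
  · intro x hx y hy hxy
    simp only [Finset.mem_image, Finset.mem_Icc] at hx hy
    obtain ⟨i, ⟨hi1, hiJ⟩, rfl⟩ := hx
    obtain ⟨j, ⟨hj1, hjJ⟩, rfl⟩ := hy
    have hij : i ≠ j := fun h => hxy (by rw [h])
    rcases lt_or_gt_of_ne hij with h | h
    · have := hmono i j hi1 hiJ hj1 hjJ h
      rw [abs_sub_comm, abs_of_nonneg (by linarith)]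
      linarith
    · have := hmono j i hj1 hjJ hi1 hiJ h
      rw [abs_of_nonneg (by linarith)]
      linarith
  · have hinjp : Set.InjOn p (Finset.Icc 1 J) := by
      intro i hi j hj hij
      simp only [Finset.coe_Icc, Set.mem_Icc] at hi hj
      by_contra hne
      rcases lt_or_gt_of_ne hne with h | h
      · have := hmono i j hi.1 hi.2 hj.1 hj.2 h
        linarith [hij.le, hij.ge]
      · have := hmono j i hj.1 hj.2 hi.1 hi.2 h
        linarith [hij.le, hij.ge]
    have hcard : ((Finset.Icc 1 J).image p).card = J := by
      rw [Finset.card_image_of_injOn hinjp, Nat.card_Icc]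
      omega
    rw [hcard]
    -- (b/4) * r^(b-1) ≤ T/(4r) ≤ J
    have hLb : L ≤ (1/r) ^ b / b := log_le_rpow hrinv1 hb
    have hrb : r ^ b * (1/r) ^ b = 1 := by
      rw [← Real.mul_rpow hr.le (by positivity)]
      rw [mul_one_div, div_self (ne_of_gt hr), Real.one_rpow]
    have hstep : b * r ^ b * L ≤ 1 := by
      have hb' : 0 < r ^ b := by positivity
      calc b * r ^ b * L ≤ b * r ^ b * ((1/r) ^ b / b) := by
            apply mul_le_mul_of_nonneg_left hLb (by positivity)
        _ = r ^ b * (1/r) ^ b := by field_simp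
        _ = 1 := hrb
    have hfin : (b/4) * r^(b-1) ≤ T/(4*r) := by
      have hrb1 : r^(b-1) = r^b / r := by
        rw [Real.rpow_sub hr, Real.rpow_one]
      have hTr : T/(4*r) = 1/(4*r*L) := by
        rw [hT]; field_simp
      rw [hrb1, hTr, le_div_iff₀ (by positivity)]
      have hexpand : b/4 * (r^b/r) * (4*r*L) = b * r^b * L := by
        field_simp
      rw [hexpand]
      exact hstep
    linarith [hJT4, hfin]

end P7
section P8
set_option maxHeartbeats 1600000

lemma arith_main {θ s δ r NR YR a γ : ℝ} (hθ0 : 0 < θ) (hθ1 : θ ≤ 1)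
    (ha : a = 1/(1+θ)) (hγ : γ = θ*((1 + θ/(1+θ)) - s)/2) (hs1 : 1 < s)
    (hs2 : s < 1 + θ/(1+θ)) (hδ0 : 0 < δ) (hδ1 : δ ≤ 1)
    (hrlo : δ^(1/θ) ≤ r) (hrhi : r ≤ δ)
    (hNl : δ^(-a) ≤ NR) (hNu : NR ≤ 2*δ^(-a)) (hYl : δ^((γ-1)/θ) ≤ YR) :
    (4*NR^2*r + 1) * (r * δ^(-(1/θ)) + 1) ≤ 64 * r^s * (NR * YR) := by
  have hθp : (0:ℝ) < 1 + θ := by linarith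
  have hρ0 : (0:ℝ) < δ^(1/θ) := by positivity
  have hr0 : 0 < r := lt_of_lt_of_le hρ0 hrlo
  have hN0 : (0:ℝ) < NR := lt_of_lt_of_le (by positivity) hNl
  have hY0 : (0:ℝ) < YR := lt_of_lt_of_le (by positivity) hYl
  have hfrac : θ/(1+θ) ≤ 1 := by rw [div_le_one (by linarith)]; linarith
  have hγ0 : 0 < γ := by rw [hγ]; nlinarith
  have hs0γ : s + γ ≤ 1 + θ/(1+θ) := by rw [hγ]; nlinarith
  have hone : δ^(1/θ) * δ^(-(1/θ)) = 1 := by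
    rw [← Real.rpow_add hδ0]; norm_num
  have hrd1 : 1 ≤ r * δ^(-(1/θ)) := by
    calc (1:ℝ) = δ^(1/θ) * δ^(-(1/θ)) := hone.symm
      _ ≤ r * δ^(-(1/θ)) := by
          apply mul_le_mul_of_nonneg_right hrlo (by positivity)
  have hf1 : r * δ^(-(1/θ)) + 1 ≤ 2*(r * δ^(-(1/θ))) := by linarith
  have hNR2 : NR^2 ≤ 4*(δ^(-a))^2 := by nlinarith
  have hNY : δ^(-a) * δ^((γ-1)/θ) ≤ NR * YR := by
    apply mul_le_mul hNl hYl (by positivity) hN0.le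
  by_cases hcase : 1 ≤ 4*NR^2*r
  · -- case A
    have hA1 : (4*NR^2*r + 1) * (r * δ^(-(1/θ)) + 1) ≤ 16 * NR^2 * (r*r) * δ^(-(1/θ)) := by
      have h1 : 4*NR^2*r + 1 ≤ 8*NR^2*r := by linarith
      calc (4*NR^2*r + 1) * (r * δ^(-(1/θ)) + 1)
          ≤ (8*NR^2*r) * (2*(r * δ^(-(1/θ)))) := by
            apply mul_le_mul h1 hf1 (by positivity) (by positivity)
        _ = 16 * NR^2 * (r*r) * δ^(-(1/θ)) := by ring
    have hrr : r^s * r^(2-s) = r*r := by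
      rw [← Real.rpow_add hr0, show s + (2-s) = (2:ℝ) by ring]
      rw [show (2:ℝ) = ((2:ℕ):ℝ) by norm_num, Real.rpow_natCast]
      ring
    have hr2s : r^(2-s) ≤ δ^(a + γ/θ) := by
      calc r^(2-s) ≤ δ^(2-s) := by
            apply Real.rpow_le_rpow hr0.le hrhi (by linarith)
        _ ≤ δ^(a + γ/θ) := by
            apply Real.rpow_le_rpow_of_exponent_ge hδ0 hδ1
            have h1 : a + γ/θ ≤ a + (1 + θ/(1+θ) - s) := by
              have : γ/θ ≤ 1 + θ/(1+θ) - s := by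
                rw [hγ]
                rw [div_le_iff₀ hθ0]
                nlinarith
              linarith
            have h2 : a + (1 + θ/(1+θ) - s) = 2 - s := by
              rw [ha]; field_simp; ring
            linarith
    have hexp : δ^(-a) * δ^(-a) * δ^(a + γ/θ) * δ^(-(1/θ)) = δ^(-a) * δ^((γ-1)/θ) := by
      rw [← Real.rpow_add hδ0, ← Real.rpow_add hδ0, ← Real.rpow_add hδ0, ← Real.rpow_add hδ0]
      congr 1
      field_simp
      ring
    calc (4*NR^2*r + 1) * (r * δ^(-(1/θ)) + 1)
        ≤ 16 * NR^2 * (r*r) * δ^(-(1/θ)) := hA1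
      _ ≤ 16 * (4*(δ^(-a))^2) * (r*r) * δ^(-(1/θ)) := by
          apply mul_le_mul_of_nonneg_right _ (by positivity)
          apply mul_le_mul_of_nonneg_right _ (by positivity)
          linarith [hNR2]
      _ = 64 * (δ^(-a) * δ^(-a)) * (r^s * r^(2-s)) * δ^(-(1/θ)) := by rw [hrr]; ring
      _ ≤ 64 * (δ^(-a) * δ^(-a)) * (r^s * δ^(a + γ/θ)) * δ^(-(1/θ)) := by
          apply mul_le_mul_of_nonneg_right _ (by positivity)
          exact mul_le_mul_of_nonneg_left (mul_le_mul_of_nonneg_left hr2s (by positivity))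
            (by positivity)
      _ = 64 * r^s * (δ^(-a) * δ^(-a) * δ^(a + γ/θ) * δ^(-(1/θ))) := by ring
      _ = 64 * r^s * (δ^(-a) * δ^((γ-1)/θ)) := by rw [hexp]
      _ ≤ 64 * r^s * (NR * YR) := by
          apply mul_le_mul_of_nonneg_left hNY (by positivity)
  · -- case B
    push_neg at hcase
    have hB1 : (4*NR^2*r + 1) * (r * δ^(-(1/θ)) + 1) ≤ 4 * r * δ^(-(1/θ)) := by
      have h1 : 4*NR^2*r + 1 ≤ 2 := by linarith
      calc (4*NR^2*r + 1) * (r * δ^(-(1/θ)) + 1)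
          ≤ 2 * (2*(r * δ^(-(1/θ)))) := by
            apply mul_le_mul h1 hf1 (by positivity) (by norm_num)
        _ = 4 * r * δ^(-(1/θ)) := by ring
    have hrr : r^s * r^(1-s) = r := by
      rw [← Real.rpow_add hr0, show s + (1-s) = (1:ℝ) by ring, Real.rpow_one]
    have hr1s : r^(1-s) ≤ δ^(γ/θ - a) := by
      calc r^(1-s) ≤ (δ^(1/θ))^(1-s) := by
            apply Real.rpow_le_rpow_of_nonpos hρ0 hrlo (by linarith)
        _ = δ^((1-s)/θ) := by
            rw [← Real.rpow_mul hδ0.le]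
            congr 1; field_simp
        _ ≤ δ^(γ/θ - a) := by
            apply Real.rpow_le_rpow_of_exponent_ge hδ0 hδ1
            have haθ : a * θ = θ/(1+θ) := by rw [ha]; field_simp
            have h2 : γ - a*θ ≤ 1 - s := by rw [hγ, haθ]; nlinarith
            have h3 : γ/θ - a = (γ - a*θ)/θ := by field_simp
            have h4 : (γ - a*θ)/θ ≤ (1-s)/θ := div_le_div_of_nonneg_right h2 hθ0.le
            linarith
    have hexp : δ^(γ/θ - a) * δ^(-(1/θ)) = δ^(-a) * δ^((γ-1)/θ) := by
      rw [← Real.rpow_add hδ0, ← Real.rpow_add hδ0]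
      congr 1
      field_simp
      ring
    calc (4*NR^2*r + 1) * (r * δ^(-(1/θ)) + 1)
        ≤ 4 * r * δ^(-(1/θ)) := hB1
      _ = 4 * (r^s * r^(1-s)) * δ^(-(1/θ)) := by rw [hrr]
      _ ≤ 4 * (r^s * δ^(γ/θ - a)) * δ^(-(1/θ)) := by
          apply mul_le_mul_of_nonneg_right _ (by positivity)
          exact mul_le_mul_of_nonneg_left (mul_le_mul_of_nonneg_left hr1s (by positivity))
            (by norm_num)
      _ = 4 * r^s * (δ^(γ/θ - a) * δ^(-(1/θ))) := by ring
      _ = 4 * r^s * (δ^(-a) * δ^((γ-1)/θ)) := by rw [hexp]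
      _ ≤ 4 * r^s * (NR * YR) := by
          apply mul_le_mul_of_nonneg_left hNY (by positivity)
      _ ≤ 64 * r^s * (NR * YR) := by
          apply mul_le_mul_of_nonneg_right _ (by positivity)
          apply mul_le_mul_of_nonneg_right _ (by positivity)
          linarith
end P8
section P9
set_option maxHeartbeats 1600000
open scoped Classical

lemma icov_neg {θ s : ℝ} (hθ0 : 0 < θ) (hθ1 : θ ≤ 1) (hs1 : 1 < s)
    (hs2 : s < 1 + θ/(1+θ)) :
    ∃ δ₀ > (0:ℝ), ∀ δ : ℝ, 0 < δ → δ ≤ δ₀ →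
      ¬ ICov Fprod s (δ ^ (1/θ)) δ (1/65) := by
  have hθp : (0:ℝ) < 1 + θ := by linarith
  have hfrac : θ/(1+θ) ≤ 1/2 := by
    rw [div_le_div_iff₀ hθp (by norm_num)]; linarith
  set a := 1/(1+θ) with ha
  set γ := θ*((1 + θ/(1+θ)) - s)/2 with hγ
  set b := γ/2 with hb
  have hγ0 : 0 < γ := by rw [hγ]; nlinarith
  have hγ4 : γ ≤ 1/4 := by rw [hγ]; nlinarith
  have hb0 : 0 < b := by rw [hb]; linarith
  have hb2 : b ≤ 1/2 := by rw [hb]; linarith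
  refine ⟨min (1/64) ((b/4) ^ b⁻¹), by positivity, ?_⟩
  intro δ hδ hδ₀
  have hδ64 : δ ≤ 1/64 := le_trans hδ₀ (min_le_left _ _)
  have hδ1 : δ ≤ 1 := by linarith
  have hδb : δ ≤ (b/4) ^ b⁻¹ := le_trans hδ₀ (min_le_right _ _)
  have hθinv : 1 ≤ 1/θ := by rw [le_div_iff₀ hθ0]; linarith
  set ρ := δ ^ (1/θ) with hρ
  have hρ0 : 0 < ρ := by positivity
  have hρδ : ρ ≤ δ := by
    calc ρ = δ ^ (1/θ) := hρ
      _ ≤ δ ^ (1:ℝ) := Real.rpow_le_rpow_of_exponent_ge hδ hδ1 hθinv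
      _ = δ := Real.rpow_one δ
  have hρ64 : ρ ≤ 1/64 := le_trans hρδ hδ64
  set N := ⌈δ ^ (-a)⌉₊ with hN
  have ha0 : 0 < a := by rw [ha]; positivity
  have hN1 : 1 ≤ N := Nat.one_le_ceil_iff.mpr (by positivity)
  obtain ⟨X, hXsub, hXcard, hXsep⟩ := sepX N hN1
  obtain ⟨Y, hYsub, hYsep, hYcard⟩ := sepLog hb0 hb2 hρ0 hρ64
  have hNl : δ ^ (-a) ≤ (N:ℝ) := Nat.le_ceil _
  have hNu : (N:ℝ) ≤ 2 * δ ^ (-a) := by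
    have h1 := ceil_le_add_one (show (0:ℝ) ≤ δ ^ (-a) by positivity)
    have h2 := one_le_rpow_neg hδ hδ1 ha0.le
    rw [hN]; linarith
  -- lower bound on Y.card
  have hYl : δ ^ ((γ-1)/θ) ≤ (Y.card : ℝ) := by
    have hρb : ρ ^ b ≤ b/4 := by
      calc ρ ^ b ≤ δ ^ b := Real.rpow_le_rpow hρ0.le hρδ hb0.le
        _ ≤ ((b/4) ^ b⁻¹) ^ b := Real.rpow_le_rpow hδ.le hδb hb0.le
        _ = b/4 := Real.rpow_inv_rpow (by positivity) (ne_of_gt hb0)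
    have hsplit : ρ ^ (γ-1) = ρ ^ (b-1) * ρ ^ b := by
      rw [← Real.rpow_add hρ0]
      congr 1
      rw [hb]; ring
    have h1 : δ ^ ((γ-1)/θ) = ρ ^ (γ-1) := by
      rw [hρ, ← Real.rpow_mul hδ.le]
      congr 1
      field_simp
    calc δ ^ ((γ-1)/θ) = ρ ^ (b-1) * ρ ^ b := by rw [h1, hsplit]
      _ ≤ ρ ^ (b-1) * (b/4) := by
          apply mul_le_mul_of_nonneg_left hρb (by positivity)
      _ = (b/4) * ρ ^ (b-1) := by ring
      _ ≤ (Y.card : ℝ) := hYcard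
  have hY1 : (0:ℝ) < (Y.card : ℝ) := lt_of_lt_of_le (by positivity) hYl
  have hN0 : (0:ℝ) < (N:ℝ) := by exact_mod_cast Nat.pos_of_ne_zero (by omega)
  set M := (N:ℝ) * (Y.card : ℝ) with hM
  have hM0 : 0 < M := by positivity
  set P := X ×ˢ Y with hP
  rintro ⟨ι, hcnt, U, hcov, hdiam, hsum⟩
  set d : ι → ℝ := fun i => (EMetric.diam (U i)).toReal with hd
  have hdne : ∀ i, EMetric.diam (U i) ≠ ⊤ := fun i =>
    ne_top_of_le_ne_top ENNReal.ofReal_ne_top (hdiam i).2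
  have hd_hi : ∀ i, d i ≤ δ := fun i =>
    ENNReal.toReal_le_of_le_ofReal hδ.le (hdiam i).2
  have hd_lo : ∀ i, ρ ≤ d i := fun i =>
    (ENNReal.ofReal_le_iff_le_toReal (hdne i)).mp (hdiam i).1
  have hd0 : ∀ i, 0 < d i := fun i => lt_of_lt_of_le hρ0 (hd_lo i)
  have hdiam_eq : ∀ i, EMetric.diam (U i) = ENNReal.ofReal (d i) := fun i =>
    (ENNReal.ofReal_toReal (hdne i)).symm
  set cnt : ι → ℕ := fun i => (P.filter (fun p : ℝ × ℝ => pt p.1 p.2 ∈ U i)).card with hcnt'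
  -- counting bound for each i
  have hcnt_le : ∀ i, (cnt i : ℝ) ≤ 64 * (d i)^s * M := by
    intro i
    have hsx : (0:ℝ) < 1/(4*(N:ℝ)^2) := by positivity
    have hcount := count2D (U := U i) (r := d i) (sx := 1/(4*(N:ℝ)^2)) (sy := ρ) X Y
      (fun p hp q hq => by
        rw [dist_edist]
        exact ENNReal.toReal_mono (hdne i) (EMetric.edist_le_diam_of_mem hp hq))
      (hd0 i).le hsx hρ0 hXsep hYsep
    have he1 : d i / (1/(4*(N:ℝ)^2)) = 4*(N:ℝ)^2 * (d i) := by
      field_simp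
    have he2 : d i / ρ = d i * δ^(-(1/θ)) := by
      rw [hρ, Real.rpow_neg hδ.le, div_eq_mul_inv]
    rw [he1, he2] at hcount
    calc (cnt i : ℝ) ≤ (4*(N:ℝ)^2 * (d i) + 1) * ((d i) * δ^(-(1/θ)) + 1) := hcount
      _ ≤ 64 * (d i)^s * ((N:ℝ) * (Y.card:ℝ)) :=
          arith_main hθ0 hθ1 ha hγ hs1 hs2 hδ hδ1 (hd_lo i) (hd_hi i) hNl hNu hYl
  -- points of P are covered
  have hPcov : ∀ p ∈ P, ∃ i, pt p.1 p.2 ∈ U i := by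
    intro p hp
    rw [hP, Finset.mem_product] at hp
    have hmem : pt p.1 p.2 ∈ Fprod := by
      constructor
      · exact hXsub hp.1
      · exact (hYsub hp.2).1
    exact Set.mem_iUnion.mp (hcov hmem)
  -- main chain
  have hpoint : ∀ i, (cnt i : ENNReal) * ENNReal.ofReal (1/(64*M))
      ≤ EMetric.diam (U i) ^ s := by
    intro i
    rw [hdiam_eq i, ENNReal.ofReal_rpow_of_pos (hd0 i), ← ENNReal.ofReal_natCast (cnt i),
      ← ENNReal.ofReal_mul (Nat.cast_nonneg _)]
    apply ENNReal.ofReal_le_ofReal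
    rw [mul_one_div, div_le_iff₀ (show (0:ℝ) < 64 * M from mul_pos (by norm_num) hM0)]
    calc (cnt i : ℝ) ≤ 64 * (d i)^s * M := hcnt_le i
      _ = (d i)^s * (64 * M) := by ring
  have hPcard : (P.card : ENNReal) * ENNReal.ofReal (1/(64*M)) = ENNReal.ofReal (1/64) := by
    have h1 : (P.card : ℝ) = M := by
      have h2 : P.card = N * Y.card := by rw [hP, Finset.card_product, hXcard]
      rw [h2, hM]
      push_cast
      ring
    have hMne : M ≠ 0 := ne_of_gt hM0
    rw [← ENNReal.ofReal_natCast P.card, ← ENNReal.ofReal_mul (Nat.cast_nonneg _), h1,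
      show M * (1/(64*M)) = 1/64 by field_simp]
  have hchain : ENNReal.ofReal (1/64) ≤ ENNReal.ofReal (1/65) := by
    calc ENNReal.ofReal (1/64) = (P.card : ENNReal) * ENNReal.ofReal (1/(64*M)) := hPcard.symm
      _ ≤ (∑' i, (cnt i : ENNReal)) * ENNReal.ofReal (1/(64*M)) := by
          apply mul_le_mul_left (tsum_count_ge U P hPcov)
      _ = ∑' i, (cnt i : ENNReal) * ENNReal.ofReal (1/(64*M)) := ENNReal.tsum_mul_right.symm
      _ ≤ ∑' i, EMetric.diam (U i) ^ s := ENNReal.tsum_le_tsum hpoint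
      _ ≤ ENNReal.ofReal (1/65) := hsum
  rw [ENNReal.ofReal_le_ofReal_iff (by norm_num)] at hchain
  norm_num at hchain
end P9
section P10
set_option maxHeartbeats 1600000
open scoped Classical

lemma eqcov_neg {s : ℝ} (hs1 : 1 < s) (hs2 : s < 3/2) :
    ∃ δ₀ > (0:ℝ), ∀ δ : ℝ, 0 < δ → δ ≤ δ₀ → ¬ EqCov Fprod s δ (1/2) := by
  set b := (3/2 - s)/2 with hb
  have hb0 : 0 < b := by rw [hb]; linarith
  have hb2 : b ≤ 1/2 := by rw [hb]; linarith
  refine ⟨min (1/64) ((b/64) ^ b⁻¹), by positivity, ?_⟩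
  intro δ hδ hδ₀
  have hδ64 : δ ≤ 1/64 := le_trans hδ₀ (min_le_left _ _)
  have hδ1 : δ ≤ 1 := by linarith
  have hδb : δ ≤ (b/64) ^ b⁻¹ := le_trans hδ₀ (min_le_right _ _)
  set Nf := δ ^ (-(1/2:ℝ)) with hNf
  have hNf0 : 0 < Nf := by positivity
  have hNf8 : (8:ℝ) ≤ Nf := by
    have h1 : ((1/64:ℝ)) ^ (-(1/2:ℝ)) ≤ Nf :=
      Real.rpow_le_rpow_of_nonpos hδ hδ64 (by norm_num)
    have h2 : ((1/64:ℝ)) ^ (-(1/2:ℝ)) = 8 := by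
      rw [show (1/64:ℝ) = (8:ℝ) ^ (-(2:ℝ)) by
            rw [Real.rpow_neg (by norm_num), show ((2:ℝ)) = ((2:ℕ):ℝ) by norm_num,
              Real.rpow_natCast]
            norm_num,
        ← Real.rpow_mul (by norm_num : (0:ℝ) ≤ 8),
        show (-(2:ℝ)) * (-(1/2)) = 1 by norm_num, Real.rpow_one]
    linarith
  set N := ⌊Nf/2⌋₊ with hN
  have hNu : (N:ℝ) ≤ Nf/2 := Nat.floor_le (by positivity)
  have hNl : Nf/4 ≤ (N:ℝ) := by
    have h1 := Nat.lt_floor_add_one (Nf/2)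
    rw [hN]; linarith
  have hN1 : 1 ≤ N := by
    have : (1:ℝ) ≤ (N:ℝ) := by linarith
    exact_mod_cast this
  obtain ⟨X, hXsub, hXcard, hXsep⟩ := sepX N hN1
  obtain ⟨Y, hYsub, hYsep, hYcard⟩ := sepLog hb0 hb2 hδ hδ64
  have hY1 : (0:ℝ) < (Y.card : ℝ) := lt_of_lt_of_le (by positivity) hYcard
  have hN0 : (0:ℝ) < (N:ℝ) := by linarith
  have hsq : Nf * Nf = δ ^ (-(1:ℝ)) := by
    rw [hNf, ← Real.rpow_add hδ]; norm_num
  have h4N2 : 4*(N:ℝ)^2*δ ≤ 1 := by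
    have h1 : (N:ℝ)^2 ≤ Nf*Nf/4 := by nlinarith
    have h2 : δ ^ (-(1:ℝ)) * δ = 1 := by
      rw [← Real.rpow_add_one (ne_of_gt hδ)]; norm_num
    calc 4*(N:ℝ)^2*δ ≤ 4*(Nf*Nf/4)*δ := by nlinarith
      _ = (Nf*Nf)*δ := by ring
      _ = δ ^ (-(1:ℝ)) * δ := by rw [hsq]
      _ = 1 := h2
  set P := X ×ˢ Y with hP
  rintro ⟨ι, hcnt, U, hcov, hdiam, hsum⟩
  have hdiam_eq : ∀ i, EMetric.diam (U i) = ENNReal.ofReal δ := hdiam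
  set cnt : ι → ℕ := fun i => (P.filter (fun p : ℝ × ℝ => pt p.1 p.2 ∈ U i)).card with hcnt'
  have hcnt_le : ∀ i, (cnt i : ℝ) ≤ 4 := by
    intro i
    have hsx : (0:ℝ) < 1/(4*(N:ℝ)^2) := by positivity
    have hcount := count2D (U := U i) (r := δ) (sx := 1/(4*(N:ℝ)^2)) (sy := δ) X Y
      (fun p hp q hq => by
        rw [dist_edist]
        have h1 : edist p q ≤ ENNReal.ofReal δ := by
          rw [← hdiam_eq i]
          exact EMetric.edist_le_diam_of_mem hp hq
        exact ENNReal.toReal_le_of_le_ofReal hδ.le h1)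
      hδ.le hsx hδ hXsep hYsep
    have he1 : δ / (1/(4*(N:ℝ)^2)) = 4*(N:ℝ)^2 * δ := by
      field_simp
    have he2 : δ / δ = (1:ℝ) := div_self (ne_of_gt hδ)
    rw [he1, he2] at hcount
    calc (cnt i : ℝ) ≤ (4*(N:ℝ)^2 * δ + 1) * (1 + 1) := hcount
      _ ≤ (1 + 1) * 2 := by nlinarith
      _ = 4 := by norm_num
  have hPcov : ∀ p ∈ P, ∃ i, pt p.1 p.2 ∈ U i := by
    intro p hp
    rw [hP, Finset.mem_product] at hp
    have hmem : pt p.1 p.2 ∈ Fprod := ⟨hXsub hp.1, (hYsub hp.2).1⟩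
    exact Set.mem_iUnion.mp (hcov hmem)
  have hpoint : ∀ i, (cnt i : ENNReal) * ENNReal.ofReal (δ^s/4)
      ≤ EMetric.diam (U i) ^ s := by
    intro i
    rw [hdiam_eq i, ENNReal.ofReal_rpow_of_pos hδ, ← ENNReal.ofReal_natCast (cnt i),
      ← ENNReal.ofReal_mul (by positivity)]
    apply ENNReal.ofReal_le_ofReal
    have h1 := hcnt_le i
    have h2 : (0:ℝ) ≤ δ^s/4 := by positivity
    nlinarith
  have hbig : (1:ℝ) ≤ (P.card : ℝ) * (δ^s/4) := by
    have h1 : (P.card : ℝ) = (N:ℝ) * (Y.card:ℝ) := by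
      have h2 : P.card = N * Y.card := by rw [hP, Finset.card_product, hXcard]
      rw [h2]; push_cast; ring
    have hYl : (b/4) * δ^(b-1) ≤ (Y.card:ℝ) := hYcard
    have hδb' : δ^b ≤ b/64 := by
      calc δ^b ≤ ((b/64) ^ b⁻¹)^b := Real.rpow_le_rpow hδ.le hδb hb0.le
        _ = b/64 := Real.rpow_inv_rpow (by positivity) (ne_of_gt hb0)
    have hexp : Nf * δ^(b-1) * δ^s = δ^(-b) := by
      rw [hNf, ← Real.rpow_add hδ, ← Real.rpow_add hδ]
      congr 1
      rw [hb]; ring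
    have hinv : δ^(-b) * δ^b = 1 := by
      rw [← Real.rpow_add hδ]; norm_num
    have hdb0 : 0 < δ^(-b) := by positivity
    have hkey : (b/64) * δ^(-b) ≥ 1 := by
      calc (b/64) * δ^(-b) ≥ δ^b * δ^(-b) := by
            apply mul_le_mul_of_nonneg_right hδb' hdb0.le
        _ = 1 := by rw [mul_comm]; exact hinv
    calc (1:ℝ) ≤ (b/64) * δ^(-b) := hkey
      _ = (Nf/4) * ((b/4) * δ^(b-1)) * (δ^s/4) := by
          rw [show (Nf/4) * ((b/4) * δ^(b-1)) * (δ^s/4) = (b/64) * (Nf * δ^(b-1) * δ^s) by ring,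
            hexp]
      _ ≤ ((N:ℝ) * (Y.card:ℝ)) * (δ^s/4) := by
          apply mul_le_mul_of_nonneg_right _ (by positivity)
          apply mul_le_mul hNl hYl (by positivity) hN0.le
      _ = (P.card : ℝ) * (δ^s/4) := by rw [h1]
  have hchain : ENNReal.ofReal 1 ≤ ENNReal.ofReal (1/2) := by
    calc ENNReal.ofReal 1 ≤ ENNReal.ofReal ((P.card : ℝ) * (δ^s/4)) :=
          ENNReal.ofReal_le_ofReal hbig
      _ = (P.card : ENNReal) * ENNReal.ofReal (δ^s/4) := by
          rw [← ENNReal.ofReal_natCast P.card, ← ENNReal.ofReal_mul (by positivity)]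
      _ ≤ (∑' i, (cnt i : ENNReal)) * ENNReal.ofReal (δ^s/4) :=
          mul_le_mul_left (tsum_count_ge U P hPcov) _
      _ = ∑' i, (cnt i : ENNReal) * ENNReal.ofReal (δ^s/4) := ENNReal.tsum_mul_right.symm
      _ ≤ ∑' i, EMetric.diam (U i) ^ s := ENNReal.tsum_le_tsum hpoint
      _ ≤ ENNReal.ofReal (1/2) := hsum
  rw [ENNReal.ofReal_le_ofReal_iff (by norm_num)] at hchain
  norm_num at hchain
end P10
section P11
set_option maxHeartbeats 1600000

lemma sInf_char {S : Set ℝ} {s₀ : ℝ}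
    (h1 : ∀ s, s₀ < s → s ∈ S) (h2 : ∀ s ∈ S, s₀ ≤ s) : sInf S = s₀ := by
  have hbdd : BddBelow S := ⟨s₀, h2⟩
  apply le_antisymm
  · by_contra h
    push_neg at h
    have hmem : (sInf S + s₀)/2 ∈ S := h1 _ (by linarith)
    have := csInf_le hbdd hmem
    linarith
  · exact le_csInf ⟨s₀ + 1, h1 _ (by linarith)⟩ h2

lemma ICov_mono {F : Set (EuclideanSpace ℝ (Fin 2))} {s s' lo hi ε : ℝ}
    (hss' : s ≤ s') (hhi : hi ≤ 1) :
    ICov F s lo hi ε → ICov F s' lo hi ε := by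
  rintro ⟨ι, hc, U, hcov, hd, hsum⟩
  refine ⟨ι, hc, U, hcov, hd, le_trans (ENNReal.tsum_le_tsum fun i => ?_) hsum⟩
  apply ENNReal.rpow_le_rpow_of_exponent_ge _ hss'
  calc EMetric.diam (U i) ≤ ENNReal.ofReal hi := (hd i).2
    _ ≤ 1 := ENNReal.ofReal_le_one.mpr hhi

lemma EqCov_mono {F : Set (EuclideanSpace ℝ (Fin 2))} {s s' δ ε : ℝ}
    (hss' : s ≤ s') (hδ : δ ≤ 1) :
    EqCov F s δ ε → EqCov F s' δ ε := by
  rintro ⟨ι, hc, U, hcov, hd, hsum⟩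
  refine ⟨ι, hc, U, hcov, hd, le_trans (ENNReal.tsum_le_tsum fun i => ?_) hsum⟩
  apply ENNReal.rpow_le_rpow_of_exponent_ge _ hss'
  rw [hd i]
  exact ENNReal.ofReal_le_one.mpr hδ

lemma Fprod_countable : Fprod.Countable := by
  have hF1 : F1.Countable := by
    apply Set.Countable.insert
    apply Set.Countable.mono _ (Set.countable_range (fun k : ℕ => 1/(k:ℝ)))
    rintro x ⟨k, _, rfl⟩
    exact ⟨k, rfl⟩
  have hFlog : Flog.Countable := by
    apply Set.Countable.insert
    apply Set.Countable.mono _ (Set.countable_range (fun k : ℕ => 1/Real.log k))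
    rintro x ⟨k, _, rfl⟩
    exact ⟨k, rfl⟩
  have hsub : Fprod ⊆ (fun p : ℝ × ℝ => pt p.1 p.2) '' (F1 ×ˢ Flog) := by
    rintro z ⟨hz0, hz1⟩
    refine ⟨(z 0, z 1), ⟨hz0, hz1⟩, ?_⟩
    refine PiLp.ext fun i => ?_
    fin_cases i <;> rfl
  exact Set.Countable.mono hsub ((hF1.prod hFlog).image _)

lemma half_lt {s₀ : ℝ} (h : 1 < s₀) : 1 < (1+s₀)/2 ∧ (1+s₀)/2 < s₀ := by constructor <;> linarith

theorem stmt19 :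
    (∀ θ ∈ Set.Ioc (0:ℝ) 1,
      lowerIDim Fprod θ = θ / (1 + θ) + 1 ∧ upperIDim Fprod θ = θ / (1 + θ) + 1) ∧
    dimH Fprod = 0 ∧ lowerBoxDim Fprod = 3 / 2 ∧ upperBoxDim Fprod = 3 / 2 := by
  have hbox_up : ∀ s : ℝ, 3/2 < s →
      ∀ ε > (0:ℝ), ∃ δ₀ > (0:ℝ), ∀ δ : ℝ, 0 < δ → δ ≤ δ₀ → EqCov Fprod s δ ε :=
    fun s hs => eqcov_upper hs
  have hbox_low : ∀ s : ℝ, 0 ≤ s →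
      (∀ ε > (0:ℝ), ∀ δ₀ > (0:ℝ), ∃ δ : ℝ, 0 < δ ∧ δ ≤ δ₀ ∧ EqCov Fprod s δ ε) →
      3/2 ≤ s := by
    intro s _ hP
    by_contra hcon
    push_neg at hcon
    set s' := max s ((1+(3/2:ℝ))/2) with hs'
    have hs'1 : 1 < s' := lt_of_lt_of_le (by norm_num) (le_max_right _ _)
    have hs'2 : s' < 3/2 := max_lt hcon (by norm_num)
    have hss' : s ≤ s' := le_max_left _ _
    obtain ⟨δ₀, hδ₀, hneg⟩ := eqcov_neg hs'1 hs'2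
    obtain ⟨δ, hδpos, hδle, hcov⟩ := hP (1/2) (by norm_num) (min δ₀ 1) (by positivity)
    have h1 : δ ≤ δ₀ := le_trans hδle (min_le_left _ _)
    have h2 : δ ≤ 1 := le_trans hδle (min_le_right _ _)
    exact hneg δ hδpos h1 (EqCov_mono hss' h2 hcov)
  have hidim_up : ∀ θ : ℝ, 0 < θ → θ ≤ 1 → ∀ s : ℝ, θ/(1+θ) + 1 < s →
      ∀ ε > (0:ℝ), ∃ δ₀ > (0:ℝ), ∀ δ : ℝ, 0 < δ → δ ≤ δ₀ →
        ICov Fprod s (δ ^ (1/θ)) δ ε := by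
    intro θ hθ0 hθ1 s hs
    exact icov_upper hθ0 hθ1 (by linarith)
  have hidim_low : ∀ θ : ℝ, 0 < θ → θ ≤ 1 → ∀ s : ℝ, 0 ≤ s →
      (∀ ε > (0:ℝ), ∀ δ₀ > (0:ℝ), ∃ δ : ℝ, 0 < δ ∧ δ ≤ δ₀ ∧
        ICov Fprod s (δ ^ (1/θ)) δ ε) →
      θ/(1+θ) + 1 ≤ s := by
    intro θ hθ0 hθ1 s _ hP
    have hθp : (0:ℝ) < 1 + θ := by linarith
    have hs₀1 : 1 < θ/(1+θ) + 1 := by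
      have : 0 < θ/(1+θ) := by positivity
      linarith
    by_contra hcon
    push_neg at hcon
    set s' := max s ((1+(θ/(1+θ)+1))/2) with hs'
    have hs'1 : 1 < s' := lt_of_lt_of_le (by linarith) (le_max_right _ _)
    have hs'2 : s' < 1 + θ/(1+θ) := by
      rw [show (1:ℝ) + θ/(1+θ) = θ/(1+θ) + 1 by ring]
      exact max_lt hcon (by linarith)
    have hss' : s ≤ s' := le_max_left _ _
    obtain ⟨δ₀, hδ₀, hneg⟩ := icov_neg hθ0 hθ1 hs'1 hs'2
    obtain ⟨δ, hδpos, hδle, hcov⟩ := hP (1/65) (by norm_num) (min δ₀ 1) (by positivity)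
    have h1 : δ ≤ δ₀ := le_trans hδle (min_le_left _ _)
    have h2 : δ ≤ 1 := le_trans hδle (min_le_right _ _)
    exact hneg δ hδpos h1 (ICov_mono hss' h2 hcov)
  refine ⟨?_, ?_, ?_, ?_⟩
  · -- intermediate dimensions
    rintro θ ⟨hθ0, hθ1⟩
    have hθne : θ ≠ 0 := ne_of_gt hθ0
    constructor
    · rw [lowerIDim, if_neg hθne]
      apply sInf_char
      · intro s hs
        refine ⟨by linarith [show (0:ℝ) < θ/(1+θ) + 1 by positivity], ?_⟩
        intro ε hε δ₀ hδ₀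
        obtain ⟨δ₁, hδ₁, hall⟩ := hidim_up θ hθ0 hθ1 s hs ε hε
        exact ⟨min δ₀ δ₁, by positivity, min_le_left _ _,
          hall _ (by positivity) (min_le_right _ _)⟩
      · rintro s ⟨hs0, hsP⟩
        exact hidim_low θ hθ0 hθ1 s hs0 hsP
    · rw [upperIDim, if_neg hθne]
      apply sInf_char
      · intro s hs
        exact ⟨by linarith [show (0:ℝ) < θ/(1+θ) + 1 by positivity],
          hidim_up θ hθ0 hθ1 s hs⟩
      · rintro s ⟨hs0, hsP⟩
        apply hidim_low θ hθ0 hθ1 s hs0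
        intro ε hε δ₀ hδ₀
        obtain ⟨δ₁, hδ₁, hall⟩ := hsP ε hε
        exact ⟨min δ₀ δ₁, by positivity, min_le_left _ _,
          hall _ (by positivity) (min_le_right _ _)⟩
  · exact dimH_countable Fprod_countable
  · rw [lowerBoxDim]
    apply sInf_char
    · intro s hs
      refine ⟨by linarith, ?_⟩
      intro ε hε δ₀ hδ₀
      obtain ⟨δ₁, hδ₁, hall⟩ := hbox_up s hs ε hε
      exact ⟨min δ₀ δ₁, by positivity, min_le_left _ _,
        hall _ (by positivity) (min_le_right _ _)⟩
    · rintro s ⟨hs0, hsP⟩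
      exact hbox_low s hs0 hsP
  · rw [upperBoxDim]
    apply sInf_char
    · intro s hs
      exact ⟨by linarith, hbox_up s hs⟩
    · rintro s ⟨hs0, hsP⟩
      apply hbox_low s hs0
      intro ε hε δ₀ hδ₀
      obtain ⟨δ₁, hδ₁, hall⟩ := hsP ε hε
      exact ⟨min δ₀ δ₁, by positivity, min_le_left _ _,
        hall _ (by positivity) (min_le_right _ _)⟩
end P11
end
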